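/- arXiv:1911.09973 — 2 statements merged into one kernel-verified Lean document; each statement's English description precedes it below -/
import Mathlib

section
/- The Thue word t = τ^ω(0) does not contain 1021 as a factor. -/
/-- A word has a square if some nonempty `u` with `u ++ u` an infix. -/
def HasSquare (w : List (Fin 3)) : Prop :=
  ∃ u : List (Fin 3), u ≠ [] ∧ (u ++ u) <:+: w

def SquareFree (w : List (Fin 3)) : Prop := ¬ HasSquare w

/-- `u` occurs as a factor of the infinite word `x`. -/
def InfFactor (u : List (Fin 3)) (x : ℕ → Fin 3) : Prop :=
  ∃ m : ℕ, ∀ i < u.length, u.getD i 0 = x (m + i)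

def InfSquareFree (x : ℕ → Fin 3) : Prop :=
  ¬ ∃ u : List (Fin 3), u ≠ [] ∧ InfFactor (u ++ u) x

/-- A square-free word is irreducibly square-free if deleting any interior
letter creates a square. -/
def IrrSF (w : List (Fin 3)) : Prop :=
  SquareFree w ∧
    ∀ (w1 w2 : List (Fin 3)) (a : Fin 3),
      w = w1 ++ [a] ++ w2 → w1 ≠ [] → w2 ≠ [] → HasSquare (w1 ++ w2)

/-- The Thue morphism τ(0)=012, τ(1)=02, τ(2)=1. -/
def tau : Fin 3 → List (Fin 3) := ![[0,1,2], [0,2], [1]]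

def tauW (w : List (Fin 3)) : List (Fin 3) := w.flatMap tau

/-- The Thue word `t = τ^ω(0)`: the `n`-th letter of the fixed point of τ. -/
def thue (n : ℕ) : Fin 3 := ((tauW^[n+1]) [0]).getD n 0



lemma tauW_nil : tauW [] = [] := rfl
lemma tauW_cons0 (w : List (Fin 3)) : tauW (0 :: w) = 0 :: 1 :: 2 :: tauW w := rfl
lemma tauW_cons1 (w : List (Fin 3)) : tauW (1 :: w) = 0 :: 2 :: tauW w := rfl
lemma tauW_cons2 (w : List (Fin 3)) : tauW (2 :: w) = 1 :: tauW w := rfl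

lemma tauW_append (u v : List (Fin 3)) : tauW (u ++ v) = tauW u ++ tauW v :=
  List.flatMap_append (xs := u) (ys := v) (f := tau)

lemma fin3cases (a : Fin 3) : a = 0 ∨ a = 1 ∨ a = 2 := by fin_cases a <;> simp

lemma head_ne_two (w r : List (Fin 3)) : tauW w ≠ 2 :: r := by
  cases w with
  | nil => simp [tauW_nil]
  | cons a w =>
    rcases fin3cases a with h | h | h <;> subst h
    · rw [tauW_cons0]; simp
    · rw [tauW_cons1]; simp
    · rw [tauW_cons2]; simp

lemma head_one (w r : List (Fin 3)) (h : tauW w = 1 :: r) : ∃ w', w = 2 :: w' := by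
  cases w with
  | nil => simp [tauW_nil] at h
  | cons a w =>
    rcases fin3cases a with ha | ha | ha <;> subst ha
    · rw [tauW_cons0] at h; simp at h
    · rw [tauW_cons1] at h; simp at h
    · exact ⟨w, rfl⟩

lemma no_212 (w : List (Fin 3)) : ¬ [2, 1, 2] <:+: tauW w := by
  induction w with
  | nil => simp [tauW_nil]
  | cons a w ih =>
    rcases fin3cases a with h | h | h <;> subst h <;> intro h
    · rw [tauW_cons0, List.infix_cons_iff, List.infix_cons_iff, List.infix_cons_iff] at h
      rcases h with ⟨t, ht⟩ | ⟨t, ht⟩ | ⟨t, ht⟩ | h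
      · simp at ht
      · simp at ht
      · simp at ht
        obtain ⟨w', hw'⟩ := head_one w _ ht.symm
        subst hw'
        rw [tauW_cons2] at ht
        exact head_ne_two w' _ (by simpa using ht.symm)
      · exact ih h
    · rw [tauW_cons1, List.infix_cons_iff, List.infix_cons_iff] at h
      rcases h with ⟨t, ht⟩ | ⟨t, ht⟩ | h
      · simp at ht
      · simp at ht
        obtain ⟨w', hw'⟩ := head_one w _ ht.symm
        subst hw'
        rw [tauW_cons2] at ht
        exact head_ne_two w' _ (by simpa using ht.symm)
      · exact ih h
    · rw [tauW_cons2, List.infix_cons_iff] at h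
      rcases h with ⟨t, ht⟩ | h
      · simp at ht
      · exact ih h

lemma pull_1021 (w : List (Fin 3)) (h : [1, 0, 2, 1] <:+: tauW w) : [2, 1, 2] <:+: w := by
  induction w with
  | nil => simp [tauW_nil] at h
  | cons a w ih =>
    rcases fin3cases a with ha | ha | ha <;> subst ha
    · rw [tauW_cons0, List.infix_cons_iff, List.infix_cons_iff, List.infix_cons_iff] at h
      rcases h with ⟨t, ht⟩ | ⟨t, ht⟩ | ⟨t, ht⟩ | h
      · simp at ht
      · simp at ht
      · simp at ht
      · exact List.infix_cons (ih h)
    · rw [tauW_cons1, List.infix_cons_iff, List.infix_cons_iff] at h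
      rcases h with ⟨t, ht⟩ | ⟨t, ht⟩ | h
      · simp at ht
      · simp at ht
      · exact List.infix_cons (ih h)
    · rw [tauW_cons2, List.infix_cons_iff] at h
      rcases h with ⟨t, ht⟩ | h
      · simp at ht
        -- ht : tauW w = 0 :: 2 :: 1 :: t  (roughly)
        cases w with
        | nil => simp [tauW_nil] at ht
        | cons b w' =>
          rcases fin3cases b with hb | hb | hb <;> subst hb
          · rw [tauW_cons0] at ht; simp at ht
          · rw [tauW_cons1] at ht
            simp at ht
            obtain ⟨w'', hw''⟩ := head_one w' _ ht.symm
            subst hw''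
            exact ⟨[], w'', by simp⟩
          · rw [tauW_cons2] at ht; simp at ht
      · exact List.infix_cons (ih h)

lemma no_1021_W : ∀ k, ¬ [1, 0, 2, 1] <:+: (tauW^[k] [0]) := by
  intro k
  match k with
  | 0 => decide
  | 1 => decide
  | (k+2) =>
    rw [Function.iterate_succ_apply', Function.iterate_succ_apply']
    intro h
    exact no_212 _ (pull_1021 _ h)

lemma head0 : ∀ k, ∃ r, tauW^[k] [0] = 0 :: r := by
  intro k
  induction k with
  | zero => exact ⟨[], rfl⟩
  | succ k ih =>
    obtain ⟨r, hr⟩ := ih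
    rw [Function.iterate_succ_apply', hr, tauW_cons0]
    exact ⟨1 :: 2 :: tauW r, rfl⟩

lemma len_tauW (w : List (Fin 3)) : w.length ≤ (tauW w).length := by
  induction w with
  | nil => simp [tauW_nil]
  | cons a w ih =>
    rcases fin3cases a with h | h | h <;> subst h
    · rw [tauW_cons0]; simp; omega
    · rw [tauW_cons1]; simp; omega
    · rw [tauW_cons2]; simp; omega

lemma len_W : ∀ k, k + 1 ≤ (tauW^[k] [0]).length := by
  intro k
  induction k with
  | zero => simp
  | succ k ih =>
    obtain ⟨r, hr⟩ := head0 k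
    rw [Function.iterate_succ_apply', hr, tauW_cons0]
    have := len_tauW r
    rw [hr] at ih
    simp at ih ⊢
    omega

lemma prefix_step (k : ℕ) : tauW^[k] [0] <+: tauW^[k+1] [0] := by
  induction k with
  | zero => exact ⟨[1, 2], rfl⟩
  | succ k ih =>
    obtain ⟨r, hr⟩ := ih
    have : tauW (tauW^[k] [0]) <+: tauW (tauW^[k+1] [0]) := by
      rw [← hr, tauW_append]; exact ⟨tauW r, rfl⟩
    simpa only [← Function.iterate_succ_apply'] using this

lemma prefix_le {k K : ℕ} (h : k ≤ K) : tauW^[k] [0] <+: tauW^[K] [0] := by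
  induction K with
  | zero => simp_all
  | succ K ih =>
    rcases Nat.lt_or_ge k (K+1) with h' | h'
    · exact (ih (by omega)).trans (prefix_step K)
    · have : k = K + 1 := by omega
      subst this; exact List.prefix_refl _

lemma thue_eq {n K : ℕ} (h : n + 1 ≤ K) : thue n = (tauW^[K] [0]).getD n 0 := by
  obtain ⟨r, hr⟩ := prefix_le h
  have hn : n < (tauW^[n+1] [0]).length := by have := len_W (n+1); omega
  show (tauW^[n+1] [0]).getD n 0 = _
  rw [← hr, List.getD_append _ _ _ n hn]

theorem thue_avoids_1021 : ¬ InfFactor [1, 0, 2, 1] thue := by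
  rintro ⟨m, hm⟩
  set K := m + 5 with hK
  set L := tauW^[K] [0] with hL
  have hlen : m + 6 ≤ L.length := by have h0 := len_W K; rw [← hL] at h0; omega
  have hget : ∀ i, i < 4 → ([1,0,2,1] : List (Fin 3)).getD i 0 = L.getD (m+i) 0 := by
    intro i hi
    rw [hm i (by simpa using hi)]
    exact thue_eq (by omega)
  have hu : (L.drop m).take 4 = [1,0,2,1] := by
    apply List.ext_getElem
    · simp; omega
    · intro i h1 h2
      have hi4 : i < 4 := by simpa using h2
      have h5 := hget i hi4
      have hmi : m + i < L.length := by omega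
      rw [List.getD_eq_getElem _ _ hmi, List.getD_eq_getElem _ _ (by simpa using hi4)] at h5
      rw [List.getElem_take, List.getElem_drop]
      exact h5.symm
  have hinf : ([1,0,2,1] : List (Fin 3)) <:+: L := by
    rw [← hu]
    exact (List.take_prefix _ _).isInfix.trans (List.drop_suffix _ _).isInfix
  exact no_1021_W K hinf
end

section
/- For every square-free word w (finite of length ≥ 2, or infinite), the word φ(w) is irreducibly square-free, where φ(0)=01202120102120210, φ(1)=12010201210201021, φ(2)=20121012021012102. In particular, there exists an infinite irreducibly square-free ternary word. -/
/-- The uniform morphism φ of length 17. -/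
def phi : Fin 3 → List (Fin 3) := ![[0,1,2,0,2,1,2,0,1,0,2,1,2,0,2,1,0], [1,2,0,1,0,2,0,1,2,1,0,2,0,1,0,2,1], [2,0,1,2,1,0,1,2,0,2,1,0,1,2,1,0,2]]

def phiW (w : List (Fin 3)) : List (Fin 3) := w.flatMap phi

/-- Applying the uniform length-17 morphism φ to an infinite word. -/
def phiInf (x : ℕ → Fin 3) (n : ℕ) : Fin 3 := (phi (x (n / 17))).getD (n % 17) 0

/-- Deleting the letter at position `n` of an infinite word. -/
def delAt (x : ℕ → Fin 3) (n : ℕ) (m : ℕ) : Fin 3 :=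
  if m < n then x m else x (m + 1)

/-- An infinite word is irreducibly square-free: square-free, and deleting any
interior (position ≥ 1) letter creates a square. -/
def InfIrrSF (x : ℕ → Fin 3) : Prop :=
  InfSquareFree x ∧
    ∀ n : ℕ, 1 ≤ n → ∃ u : List (Fin 3), u ≠ [] ∧ InfFactor (u ++ u) (delAt x n)

set_option maxRecDepth 20000
set_option maxHeartbeats 4000000

def sqChk (w : List (Fin 3)) : Prop :=
  ∃ i < w.length, ∃ L < w.length, 1 ≤ L ∧ i + 2*L ≤ w.length ∧
    (w.drop i).take L = (w.drop (i+L)).take L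

-- list helpers
lemma getD_drop' (l : List (Fin 3)) (k j : ℕ) : (l.drop k).getD j 0 = l.getD (k+j) 0 := by
  rcases Nat.lt_or_ge (k+j) l.length with h | h
  · rw [List.getD_eq_getElem _ _ (by simp [List.length_drop]; omega),
      List.getD_eq_getElem _ _ h, List.getElem_drop]
  · rw [List.getD_eq_default _ _ (by simp [List.length_drop]; omega),
      List.getD_eq_default _ _ h]

lemma getD_take' (l : List (Fin 3)) (n j : ℕ) (h : j < n) : (l.take n).getD j 0 = l.getD j 0 := by
  rcases Nat.lt_or_ge j l.length with h2 | h2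
  · rw [List.getD_eq_getElem _ _ (by simp [List.length_take]; omega),
      List.getD_eq_getElem _ _ h2, List.getElem_take]
  · rw [List.getD_eq_default _ _ (by simp [List.length_take]; omega),
      List.getD_eq_default _ _ h2]

lemma slice_getD (l : List (Fin 3)) (q p j : ℕ) (hj : j < p) :
    ((l.drop q).take p).getD j 0 = l.getD (q+j) 0 := by
  rw [getD_take' _ _ _ hj, getD_drop']

lemma slice_len (l : List (Fin 3)) (d t : ℕ) (h : d + t ≤ l.length) :
    ((l.drop d).take t).length = t := by
  simp [List.length_take, List.length_drop]; omega

lemma slice_infix (l : List (Fin 3)) (d t : ℕ) : (l.drop d).take t <:+: l :=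
  ((l.drop d).take_prefix t).isInfix.trans (l.drop_suffix d).isInfix

lemma list_ext_getD (l₁ l₂ : List (Fin 3)) (h : l₁.length = l₂.length)
    (h2 : ∀ i < l₁.length, l₁.getD i 0 = l₂.getD i 0) : l₁ = l₂ := by
  apply List.ext_getElem h
  intro i h1' h2'
  rw [← List.getD_eq_getElem l₁ 0 h1', ← List.getD_eq_getElem l₂ 0 h2']
  exact h2 i h1'

lemma slice_of_eq {s m t l : List (Fin 3)} (h : s ++ m ++ t = l) :
    (l.drop s.length).take m.length = m := by
  subst h; rw [List.append_assoc, List.drop_left, List.take_left]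

lemma hasSquare_iff_sqChk (w : List (Fin 3)) : HasSquare w ↔ sqChk w := by
  constructor
  · rintro ⟨u, hu, s, t, hst⟩
    have hL : 1 ≤ u.length := List.length_pos_iff.2 hu
    have hlen : s.length + 2 * u.length + t.length = w.length := by
      have := congrArg List.length hst; simp [List.length_append] at this; omega
    have hst1 : s ++ u ++ (u ++ t) = w := by simpa [List.append_assoc] using hst
    have hst2 : (s ++ u) ++ u ++ t = w := by simpa [List.append_assoc] using hst
    have e1 := slice_of_eq hst1
    have e2 := slice_of_eq hst2
    simp only [List.length_append] at e2
    refine ⟨s.length, by omega, u.length, by omega, hL, by omega, ?_⟩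
    rw [e1, e2]
  · rintro ⟨i, hi, L, hL, hL1, hlen, heq⟩
    have h2 : w.drop i = (w.drop i).take L ++ w.drop (i+L) := by
      conv_lhs => rw [← List.take_append_drop L (w.drop i)]
      rw [List.drop_drop, Nat.add_comm]
    have h3 : w.drop (i+L) = (w.drop (i+L)).take L ++ w.drop (i+2*L) := by
      conv_lhs => rw [← List.take_append_drop L (w.drop (i+L))]
      rw [List.drop_drop]
      congr 2
      omega
    refine ⟨(w.drop i).take L, ?_, w.take i, w.drop (i+2*L), ?_⟩
    · have := slice_len w i L (by omega)
      intro h; rw [h] at this; simp at this; omega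
    · conv_rhs => rw [← List.take_append_drop i w, h2, h3, ← heq]
      simp [List.append_assoc]

lemma hasSquare_infix {d e : List (Fin 3)} (h : HasSquare d) (h2 : d <:+: e) : HasSquare e := by
  obtain ⟨u, hu, hinf⟩ := h; exact ⟨u, hu, hinf.trans h2⟩

lemma sqf_infix {v w : List (Fin 3)} (h : v <:+: w) (hw : SquareFree w) : SquareFree v :=
  fun hs => hw (hasSquare_infix hs h)

-- phi basics
lemma phi_len : ∀ a : Fin 3, (phi a).length = 17 := by decide
lemma phi_getD_zero : ∀ a : Fin 3, (phi a).getD 0 0 = a := by decide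
lemma phi_getD_16 : ∀ a b : Fin 3, (phi a).getD 16 0 = (phi b).getD 16 0 → a = b := by decide

lemma phiW_append (l₁ l₂ : List (Fin 3)) : phiW (l₁ ++ l₂) = phiW l₁ ++ phiW l₂ :=
  List.flatMap_append

lemma phiW_len (w : List (Fin 3)) : (phiW w).length = 17 * w.length := by
  induction w with
  | nil => rfl
  | cons a w ih =>
    show (phi a ++ phiW w).length = _
    simp [List.length_append, ih, phi_len, List.length_cons]
    ring

lemma phiW_getD (w : List (Fin 3)) (t : ℕ) (ht : t < 17 * w.length) :
    (phiW w).getD t 0 = (phi (w.getD (t/17) 0)).getD (t % 17) 0 := by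
  induction w generalizing t with
  | nil => simp at ht
  | cons a w ih =>
    show (phi a ++ phiW w).getD t 0 = _
    rcases Nat.lt_or_ge t 17 with h | h
    · rw [List.getD_append _ _ _ _ (by rw [phi_len]; omega)]
      have h1 : t / 17 = 0 := by omega
      have h2 : t % 17 = t := by omega
      rw [h1, h2]
      rfl
    · rw [List.getD_append_right _ _ _ _ (by rw [phi_len]; omega), phi_len]
      have hlt : t - 17 < 17 * w.length := by simp [List.length_cons] at ht; omega
      rw [ih _ hlt]
      have h1 : (t-17) / 17 + 1 = t / 17 := by omega
      have h2 : (t-17) % 17 = t % 17 := by omega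
      rw [← h1, ← h2]
      rfl

def enc : List (Fin 3) → ℕ
  | [] => 0
  | a :: l => a.val + 4 * enc l

lemma enc_lt : ∀ l : List (Fin 3), enc l < 4 ^ l.length := by
  intro l; induction l with
  | nil => simp [enc]
  | cons a l ih => simp only [enc, List.length_cons, pow_succ]; have := a.2; omega

lemma enc_drop : ∀ (i : ℕ) (l : List (Fin 3)), enc (l.drop i) = enc l / 4 ^ i := by
  intro i; induction i with
  | zero => simp
  | succ i ih =>
    intro l
    cases l with
    | nil => simp [enc, Nat.zero_div]
    | cons a l =>
      rw [List.drop_succ_cons, ih l]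
      have h4 : (a : ℕ) < 4 := by have := a.2; omega
      have hd : enc (a :: l) / 4 = enc l := by simp only [enc]; omega
      rw [pow_succ', ← Nat.div_div_eq_div_mul, hd]

lemma enc_take : ∀ (L : ℕ) (l : List (Fin 3)), enc (l.take L) = enc l % 4 ^ L := by
  intro L; induction L with
  | zero => simp [enc, Nat.mod_one]
  | succ L ih =>
    intro l
    cases l with
    | nil => simp [enc, Nat.zero_mod]
    | cons a l =>
      rw [List.take_succ_cons]
      show (a : ℕ) + 4 * enc (l.take L) = ((a : ℕ) + 4 * enc l) % 4 ^ (L+1)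
      rw [ih l, pow_succ]
      have h4 : (a : ℕ) < 4 := by have := a.2; omega
      have hc : 0 < 4 ^ L := Nat.pow_pos (by norm_num)
      have h1 : enc l % 4 ^ L < 4 ^ L := Nat.mod_lt _ hc
      have h2 : (a:ℕ) + 4 * enc l = ((a:ℕ) + 4 * (enc l % 4 ^ L)) + (4 ^ L * 4) * (enc l / 4 ^ L) := by
        have hb := Nat.div_add_mod (enc l) (4 ^ L)
        calc (a:ℕ) + 4 * enc l = (a:ℕ) + 4 * (4 ^ L * (enc l / 4 ^ L) + enc l % 4 ^ L) := by rw [hb]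
          _ = ((a:ℕ) + 4 * (enc l % 4 ^ L)) + (4 ^ L * 4) * (enc l / 4 ^ L) := by ring
      conv_rhs => rw [h2]
      rw [Nat.add_mul_mod_self_left]
      exact (Nat.mod_eq_of_lt (by omega)).symm

lemma enc_inj : ∀ (l₁ l₂ : List (Fin 3)), l₁.length = l₂.length → enc l₁ = enc l₂ → l₁ = l₂ := by
  intro l₁; induction l₁ with
  | nil => intro l₂ h _; cases l₂ <;> simp_all
  | cons a l ih =>
    intro l₂ h he
    cases l₂ with
    | nil => simp at h
    | cons b l₂ =>
      simp only [enc] at he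
      have ha : (a : ℕ) < 4 := by have := a.2; omega
      have hb : (b : ℕ) < 4 := by have := b.2; omega
      have hab : (a : ℕ) = b := by omega
      have : enc l = enc l₂ := by omega
      have hl : l = l₂ := ih l₂ (by simpa using h) this
      cases Fin.ext hab; cases hl; rfl



def delW (p : ℕ) (l : List (Fin 3)) : List (Fin 3) := l.take p ++ l.drop (p+1)

def nsqB (n len : ℕ) : Bool :=
  (List.range len).any fun i => (List.range ((len - i)/2)).any fun L1 =>
    ((n / Nat.pow 4 i) % Nat.pow 4 (L1+1) == (n / Nat.pow 4 (i+L1+1)) % Nat.pow 4 (L1+1))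

lemma sqChk_iff_nsqB (w : List (Fin 3)) : sqChk w ↔ nsqB (enc w) w.length = true := by
  simp only [nsqB, List.any_eq_true, List.mem_range, beq_iff_eq, Nat.pow_eq]
  constructor
  · rintro ⟨i, hi, L, _, hL1, hlen, heq⟩
    refine ⟨i, hi, L - 1, by omega, ?_⟩
    have := congrArg enc heq
    rw [enc_take, enc_take, enc_drop, enc_drop] at this
    rw [show L - 1 + 1 = L by omega, show i + (L-1) + 1 = i + L by omega]
    exact this
  · rintro ⟨i, hi, L1, hL1, heq⟩
    refine ⟨i, hi, L1 + 1, by omega, by omega, by omega, ?_⟩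
    apply enc_inj
    · rw [slice_len _ _ _ (by omega), slice_len _ _ _ (by omega)]
    · rw [enc_take, enc_take, enc_drop, enc_drop,
        show i + (L1+1) = i + L1 + 1 by omega]
      exact heq

lemma sqChk_of_nsqB (w : List (Fin 3)) (n l : ℕ) (h1 : enc w = n) (h2 : w.length = l)
    (h3 : nsqB n l = true) : sqChk w :=
  (sqChk_iff_nsqB w).2 (by rw [h1, h2]; exact h3)

lemma not_sqChk_of_nsqB (w : List (Fin 3)) (n l : ℕ) (h1 : enc w = n) (h2 : w.length = l)
    (h3 : nsqB n l = false) : ¬ sqChk w := fun hs => by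
  have := (sqChk_iff_nsqB w).1 hs
  rw [h1, h2, h3] at this
  cases this

lemma F2_1 : ∀ a : Fin 3, ¬ sqChk [a] → ¬ sqChk (phiW [a])
  | ⟨0,_⟩, _ => not_sqChk_of_nsqB (phiW [0]) 1650533924 17 rfl rfl rfl
  | ⟨1,_⟩, _ => not_sqChk_of_nsqB (phiW [1]) 6518360137 17 rfl rfl rfl
  | ⟨2,_⟩, _ => not_sqChk_of_nsqB (phiW [2]) 9010975122 17 rfl rfl rfl
  | ⟨_+3,h⟩, _ => absurd h (by omega)

lemma F2_2 : ∀ a b : Fin 3, ¬ sqChk [a,b] → ¬ sqChk (phiW [a,b])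
  | ⟨0,_⟩, ⟨0,_⟩, hsf => absurd (sqChk_of_nsqB ([0,0] : List (Fin 3)) 0 2 rfl rfl rfl) hsf
  | ⟨0,_⟩, ⟨1,_⟩, _ => not_sqChk_of_nsqB (phiW [0,1]) 111984574449510852132 34 rfl rfl rfl
  | ⟨0,_⟩, ⟨2,_⟩, _ => not_sqChk_of_nsqB (phiW [0,2]) 154807373817888974372 34 rfl rfl rfl
  | ⟨1,_⟩, ⟨0,_⟩, _ => not_sqChk_of_nsqB (phiW [1,0]) 28355956904592558153 34 rfl rfl rfl
  | ⟨1,_⟩, ⟨1,_⟩, hsf => absurd (sqChk_of_nsqB ([1,1] : List (Fin 3)) 5 2 rfl rfl rfl) hsf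
  | ⟨1,_⟩, ⟨2,_⟩, _ => not_sqChk_of_nsqB (phiW [1,2]) 154807373822756800585 34 rfl rfl rfl
  | ⟨2,_⟩, ⟨0,_⟩, _ => not_sqChk_of_nsqB (phiW [2,0]) 28355956907085173138 34 rfl rfl rfl
  | ⟨2,_⟩, ⟨1,_⟩, _ => not_sqChk_of_nsqB (phiW [2,1]) 111984574456871293330 34 rfl rfl rfl
  | ⟨2,_⟩, ⟨2,_⟩, hsf => absurd (sqChk_of_nsqB ([2,2] : List (Fin 3)) 10 2 rfl rfl rfl) hsf
  | ⟨_+3,h⟩, _, _ => absurd h (by omega)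
  | _, ⟨_+3,h⟩, _ => absurd h (by omega)

lemma F2_3 : ∀ a b c : Fin 3, ¬ sqChk [a,b,c] → ¬ sqChk (phiW [a,b,c])
  | ⟨0,_⟩, ⟨0,_⟩, ⟨0,_⟩, hsf => absurd (sqChk_of_nsqB ([0,0,0] : List (Fin 3)) 0 3 rfl rfl rfl) hsf
  | ⟨0,_⟩, ⟨0,_⟩, ⟨1,_⟩, hsf => absurd (sqChk_of_nsqB ([0,0,1] : List (Fin 3)) 16 3 rfl rfl rfl) hsf
  | ⟨0,_⟩, ⟨0,_⟩, ⟨2,_⟩, hsf => absurd (sqChk_of_nsqB ([0,0,2] : List (Fin 3)) 32 3 rfl rfl rfl) hsf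
  | ⟨0,_⟩, ⟨1,_⟩, ⟨0,_⟩, _ => not_sqChk_of_nsqB (phiW [0,1,0]) 487151630208041717890103191076 51 rfl rfl rfl
  | ⟨0,_⟩, ⟨1,_⟩, ⟨1,_⟩, hsf => absurd (sqChk_of_nsqB ([0,1,1] : List (Fin 3)) 20 3 rfl rfl rfl) hsf
  | ⟨0,_⟩, ⟨1,_⟩, ⟨2,_⟩, _ => not_sqChk_of_nsqB (phiW [0,1,2]) 2659570430993547836298325206564 51 rfl rfl rfl
  | ⟨0,_⟩, ⟨2,_⟩, ⟨0,_⟩, _ => not_sqChk_of_nsqB (phiW [0,2,0]) 487151630250864517258481313316 51 rfl rfl rfl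
  | ⟨0,_⟩, ⟨2,_⟩, ⟨1,_⟩, _ => not_sqChk_of_nsqB (phiW [0,2,1]) 1923880339794956669335942276644 51 rfl rfl rfl
  | ⟨0,_⟩, ⟨2,_⟩, ⟨2,_⟩, hsf => absurd (sqChk_of_nsqB ([0,2,2] : List (Fin 3)) 40 3 rfl rfl rfl) hsf
  | ⟨1,_⟩, ⟨0,_⟩, ⟨0,_⟩, hsf => absurd (sqChk_of_nsqB ([1,0,0] : List (Fin 3)) 1 3 rfl rfl rfl) hsf
  | ⟨1,_⟩, ⟨0,_⟩, ⟨1,_⟩, _ => not_sqChk_of_nsqB (phiW [1,0,1]) 1923880339668505252422645860425 51 rfl rfl rfl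
  | ⟨1,_⟩, ⟨0,_⟩, ⟨2,_⟩, _ => not_sqChk_of_nsqB (phiW [1,0,2]) 2659570430909919218753406912585 51 rfl rfl rfl
  | ⟨1,_⟩, ⟨1,_⟩, ⟨0,_⟩, hsf => absurd (sqChk_of_nsqB ([1,1,0] : List (Fin 3)) 5 3 rfl rfl rfl) hsf
  | ⟨1,_⟩, ⟨1,_⟩, ⟨1,_⟩, hsf => absurd (sqChk_of_nsqB ([1,1,1] : List (Fin 3)) 21 3 rfl rfl rfl) hsf
  | ⟨1,_⟩, ⟨1,_⟩, ⟨2,_⟩, hsf => absurd (sqChk_of_nsqB ([1,1,2] : List (Fin 3)) 37 3 rfl rfl rfl) hsf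
  | ⟨1,_⟩, ⟨2,_⟩, ⟨0,_⟩, _ => not_sqChk_of_nsqB (phiW [1,2,0]) 487151630250864517263349139529 51 rfl rfl rfl
  | ⟨1,_⟩, ⟨2,_⟩, ⟨1,_⟩, _ => not_sqChk_of_nsqB (phiW [1,2,1]) 1923880339794956669340810102857 51 rfl rfl rfl
  | ⟨1,_⟩, ⟨2,_⟩, ⟨2,_⟩, hsf => absurd (sqChk_of_nsqB ([1,2,2] : List (Fin 3)) 41 3 rfl rfl rfl) hsf
  | ⟨2,_⟩, ⟨0,_⟩, ⟨0,_⟩, hsf => absurd (sqChk_of_nsqB ([2,0,0] : List (Fin 3)) 2 3 rfl rfl rfl) hsf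
  | ⟨2,_⟩, ⟨0,_⟩, ⟨1,_⟩, _ => not_sqChk_of_nsqB (phiW [2,0,1]) 1923880339668505252425138475410 51 rfl rfl rfl
  | ⟨2,_⟩, ⟨0,_⟩, ⟨2,_⟩, _ => not_sqChk_of_nsqB (phiW [2,0,2]) 2659570430909919218755899527570 51 rfl rfl rfl
  | ⟨2,_⟩, ⟨1,_⟩, ⟨0,_⟩, _ => not_sqChk_of_nsqB (phiW [2,1,0]) 487151630208041717897463632274 51 rfl rfl rfl
  | ⟨2,_⟩, ⟨1,_⟩, ⟨1,_⟩, hsf => absurd (sqChk_of_nsqB ([2,1,1] : List (Fin 3)) 22 3 rfl rfl rfl) hsf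
  | ⟨2,_⟩, ⟨1,_⟩, ⟨2,_⟩, _ => not_sqChk_of_nsqB (phiW [2,1,2]) 2659570430993547836305685647762 51 rfl rfl rfl
  | ⟨2,_⟩, ⟨2,_⟩, ⟨0,_⟩, hsf => absurd (sqChk_of_nsqB ([2,2,0] : List (Fin 3)) 10 3 rfl rfl rfl) hsf
  | ⟨2,_⟩, ⟨2,_⟩, ⟨1,_⟩, hsf => absurd (sqChk_of_nsqB ([2,2,1] : List (Fin 3)) 26 3 rfl rfl rfl) hsf
  | ⟨2,_⟩, ⟨2,_⟩, ⟨2,_⟩, hsf => absurd (sqChk_of_nsqB ([2,2,2] : List (Fin 3)) 42 3 rfl rfl rfl) hsf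
  | ⟨_+3,h⟩, _, _, _ => absurd h (by omega)
  | _, ⟨_+3,h⟩, _, _ => absurd h (by omega)
  | _, _, ⟨_+3,h⟩, _ => absurd h (by omega)

lemma F2_4 : ∀ a b c d : Fin 3, ¬ sqChk [a,b,c,d] → ¬ sqChk (phiW [a,b,c,d])
  | ⟨0,_⟩, ⟨0,_⟩, ⟨0,_⟩, ⟨0,_⟩, hsf => absurd (sqChk_of_nsqB ([0,0,0,0] : List (Fin 3)) 0 4 rfl rfl rfl) hsf
  | ⟨0,_⟩, ⟨0,_⟩, ⟨0,_⟩, ⟨1,_⟩, hsf => absurd (sqChk_of_nsqB ([0,0,0,1] : List (Fin 3)) 64 4 rfl rfl rfl) hsf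
  | ⟨0,_⟩, ⟨0,_⟩, ⟨0,_⟩, ⟨2,_⟩, hsf => absurd (sqChk_of_nsqB ([0,0,0,2] : List (Fin 3)) 128 4 rfl rfl rfl) hsf
  | ⟨0,_⟩, ⟨0,_⟩, ⟨1,_⟩, ⟨0,_⟩, hsf => absurd (sqChk_of_nsqB ([0,0,1,0] : List (Fin 3)) 16 4 rfl rfl rfl) hsf
  | ⟨0,_⟩, ⟨0,_⟩, ⟨1,_⟩, ⟨1,_⟩, hsf => absurd (sqChk_of_nsqB ([0,0,1,1] : List (Fin 3)) 80 4 rfl rfl rfl) hsf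
  | ⟨0,_⟩, ⟨0,_⟩, ⟨1,_⟩, ⟨2,_⟩, hsf => absurd (sqChk_of_nsqB ([0,0,1,2] : List (Fin 3)) 144 4 rfl rfl rfl) hsf
  | ⟨0,_⟩, ⟨0,_⟩, ⟨2,_⟩, ⟨0,_⟩, hsf => absurd (sqChk_of_nsqB ([0,0,2,0] : List (Fin 3)) 32 4 rfl rfl rfl) hsf
  | ⟨0,_⟩, ⟨0,_⟩, ⟨2,_⟩, ⟨1,_⟩, hsf => absurd (sqChk_of_nsqB ([0,0,2,1] : List (Fin 3)) 96 4 rfl rfl rfl) hsf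
  | ⟨0,_⟩, ⟨0,_⟩, ⟨2,_⟩, ⟨2,_⟩, hsf => absurd (sqChk_of_nsqB ([0,0,2,2] : List (Fin 3)) 160 4 rfl rfl rfl) hsf
  | ⟨0,_⟩, ⟨1,_⟩, ⟨0,_⟩, ⟨0,_⟩, hsf => absurd (sqChk_of_nsqB ([0,1,0,0] : List (Fin 3)) 4 4 rfl rfl rfl) hsf
  | ⟨0,_⟩, ⟨1,_⟩, ⟨0,_⟩, ⟨1,_⟩, hsf => absurd (sqChk_of_nsqB ([0,1,0,1] : List (Fin 3)) 68 4 rfl rfl rfl) hsf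
  | ⟨0,_⟩, ⟨1,_⟩, ⟨0,_⟩, ⟨2,_⟩, _ => not_sqChk_of_nsqB (phiW [0,1,0,2]) 45691072088666922266191010312533273814564 68 rfl rfl rfl
  | ⟨0,_⟩, ⟨1,_⟩, ⟨1,_⟩, ⟨0,_⟩, hsf => absurd (sqChk_of_nsqB ([0,1,1,0] : List (Fin 3)) 20 4 rfl rfl rfl) hsf
  | ⟨0,_⟩, ⟨1,_⟩, ⟨1,_⟩, ⟨1,_⟩, hsf => absurd (sqChk_of_nsqB ([0,1,1,1] : List (Fin 3)) 84 4 rfl rfl rfl) hsf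
  | ⟨0,_⟩, ⟨1,_⟩, ⟨1,_⟩, ⟨2,_⟩, hsf => absurd (sqChk_of_nsqB ([0,1,1,2] : List (Fin 3)) 148 4 rfl rfl rfl) hsf
  | ⟨0,_⟩, ⟨1,_⟩, ⟨2,_⟩, ⟨0,_⟩, _ => not_sqChk_of_nsqB (phiW [0,1,2,0]) 8369201280482189509491647894828833908260 68 rfl rfl rfl
  | ⟨0,_⟩, ⟨1,_⟩, ⟨2,_⟩, ⟨1,_⟩, _ => not_sqChk_of_nsqB (phiW [0,1,2,1]) 33052012563346824962223461079670495192612 68 rfl rfl rfl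
  | ⟨0,_⟩, ⟨1,_⟩, ⟨2,_⟩, ⟨2,_⟩, hsf => absurd (sqChk_of_nsqB ([0,1,2,2] : List (Fin 3)) 164 4 rfl rfl rfl) hsf
  | ⟨0,_⟩, ⟨2,_⟩, ⟨0,_⟩, ⟨0,_⟩, hsf => absurd (sqChk_of_nsqB ([0,2,0,0] : List (Fin 3)) 8 4 rfl rfl rfl) hsf
  | ⟨0,_⟩, ⟨2,_⟩, ⟨0,_⟩, ⟨1,_⟩, _ => not_sqChk_of_nsqB (phiW [0,2,0,1]) 33052012561174406161480777760630651299364 68 rfl rfl rfl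
  | ⟨0,_⟩, ⟨2,_⟩, ⟨0,_⟩, ⟨2,_⟩, hsf => absurd (sqChk_of_nsqB ([0,2,0,2] : List (Fin 3)) 136 4 rfl rfl rfl) hsf
  | ⟨0,_⟩, ⟨2,_⟩, ⟨1,_⟩, ⟨0,_⟩, _ => not_sqChk_of_nsqB (phiW [0,2,1,0]) 8369201279746499418293056727866450978340 68 rfl rfl rfl
  | ⟨0,_⟩, ⟨2,_⟩, ⟨1,_⟩, ⟨1,_⟩, hsf => absurd (sqChk_of_nsqB ([0,2,1,1] : List (Fin 3)) 88 4 rfl rfl rfl) hsf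
  | ⟨0,_⟩, ⟨2,_⟩, ⟨1,_⟩, ⟨2,_⟩, _ => not_sqChk_of_nsqB (phiW [0,2,1,2]) 45691072090103650975777925263979112900132 68 rfl rfl rfl
  | ⟨0,_⟩, ⟨2,_⟩, ⟨2,_⟩, ⟨0,_⟩, hsf => absurd (sqChk_of_nsqB ([0,2,2,0] : List (Fin 3)) 40 4 rfl rfl rfl) hsf
  | ⟨0,_⟩, ⟨2,_⟩, ⟨2,_⟩, ⟨1,_⟩, hsf => absurd (sqChk_of_nsqB ([0,2,2,1] : List (Fin 3)) 104 4 rfl rfl rfl) hsf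
  | ⟨0,_⟩, ⟨2,_⟩, ⟨2,_⟩, ⟨2,_⟩, hsf => absurd (sqChk_of_nsqB ([0,2,2,2] : List (Fin 3)) 168 4 rfl rfl rfl) hsf
  | ⟨1,_⟩, ⟨0,_⟩, ⟨0,_⟩, ⟨0,_⟩, hsf => absurd (sqChk_of_nsqB ([1,0,0,0] : List (Fin 3)) 1 4 rfl rfl rfl) hsf
  | ⟨1,_⟩, ⟨0,_⟩, ⟨0,_⟩, ⟨1,_⟩, hsf => absurd (sqChk_of_nsqB ([1,0,0,1] : List (Fin 3)) 65 4 rfl rfl rfl) hsf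
  | ⟨1,_⟩, ⟨0,_⟩, ⟨0,_⟩, ⟨2,_⟩, hsf => absurd (sqChk_of_nsqB ([1,0,0,2] : List (Fin 3)) 129 4 rfl rfl rfl) hsf
  | ⟨1,_⟩, ⟨0,_⟩, ⟨1,_⟩, ⟨0,_⟩, hsf => absurd (sqChk_of_nsqB ([1,0,1,0] : List (Fin 3)) 17 4 rfl rfl rfl) hsf
  | ⟨1,_⟩, ⟨0,_⟩, ⟨1,_⟩, ⟨1,_⟩, hsf => absurd (sqChk_of_nsqB ([1,0,1,1] : List (Fin 3)) 81 4 rfl rfl rfl) hsf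
  | ⟨1,_⟩, ⟨0,_⟩, ⟨1,_⟩, ⟨2,_⟩, _ => not_sqChk_of_nsqB (phiW [1,0,1,2]) 45691072090103650975651473847065816483913 68 rfl rfl rfl
  | ⟨1,_⟩, ⟨0,_⟩, ⟨2,_⟩, ⟨0,_⟩, _ => not_sqChk_of_nsqB (phiW [1,0,2,0]) 8369201280482189509408019277283915614281 68 rfl rfl rfl
  | ⟨1,_⟩, ⟨0,_⟩, ⟨2,_⟩, ⟨1,_⟩, _ => not_sqChk_of_nsqB (phiW [1,0,2,1]) 33052012563346824962139832462125576898633 68 rfl rfl rfl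
  | ⟨1,_⟩, ⟨0,_⟩, ⟨2,_⟩, ⟨2,_⟩, hsf => absurd (sqChk_of_nsqB ([1,0,2,2] : List (Fin 3)) 161 4 rfl rfl rfl) hsf
  | ⟨1,_⟩, ⟨1,_⟩, ⟨0,_⟩, ⟨0,_⟩, hsf => absurd (sqChk_of_nsqB ([1,1,0,0] : List (Fin 3)) 5 4 rfl rfl rfl) hsf
  | ⟨1,_⟩, ⟨1,_⟩, ⟨0,_⟩, ⟨1,_⟩, hsf => absurd (sqChk_of_nsqB ([1,1,0,1] : List (Fin 3)) 69 4 rfl rfl rfl) hsf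
  | ⟨1,_⟩, ⟨1,_⟩, ⟨0,_⟩, ⟨2,_⟩, hsf => absurd (sqChk_of_nsqB ([1,1,0,2] : List (Fin 3)) 133 4 rfl rfl rfl) hsf
  | ⟨1,_⟩, ⟨1,_⟩, ⟨1,_⟩, ⟨0,_⟩, hsf => absurd (sqChk_of_nsqB ([1,1,1,0] : List (Fin 3)) 21 4 rfl rfl rfl) hsf
  | ⟨1,_⟩, ⟨1,_⟩, ⟨1,_⟩, ⟨1,_⟩, hsf => absurd (sqChk_of_nsqB ([1,1,1,1] : List (Fin 3)) 85 4 rfl rfl rfl) hsf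
  | ⟨1,_⟩, ⟨1,_⟩, ⟨1,_⟩, ⟨2,_⟩, hsf => absurd (sqChk_of_nsqB ([1,1,1,2] : List (Fin 3)) 149 4 rfl rfl rfl) hsf
  | ⟨1,_⟩, ⟨1,_⟩, ⟨2,_⟩, ⟨0,_⟩, hsf => absurd (sqChk_of_nsqB ([1,1,2,0] : List (Fin 3)) 37 4 rfl rfl rfl) hsf
  | ⟨1,_⟩, ⟨1,_⟩, ⟨2,_⟩, ⟨1,_⟩, hsf => absurd (sqChk_of_nsqB ([1,1,2,1] : List (Fin 3)) 101 4 rfl rfl rfl) hsf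
  | ⟨1,_⟩, ⟨1,_⟩, ⟨2,_⟩, ⟨2,_⟩, hsf => absurd (sqChk_of_nsqB ([1,1,2,2] : List (Fin 3)) 165 4 rfl rfl rfl) hsf
  | ⟨1,_⟩, ⟨2,_⟩, ⟨0,_⟩, ⟨0,_⟩, hsf => absurd (sqChk_of_nsqB ([1,2,0,0] : List (Fin 3)) 9 4 rfl rfl rfl) hsf
  | ⟨1,_⟩, ⟨2,_⟩, ⟨0,_⟩, ⟨1,_⟩, _ => not_sqChk_of_nsqB (phiW [1,2,0,1]) 33052012561174406161480777760635519125577 68 rfl rfl rfl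
  | ⟨1,_⟩, ⟨2,_⟩, ⟨0,_⟩, ⟨2,_⟩, _ => not_sqChk_of_nsqB (phiW [1,2,0,2]) 45691072088666922266233833111906519763017 68 rfl rfl rfl
  | ⟨1,_⟩, ⟨2,_⟩, ⟨1,_⟩, ⟨0,_⟩, _ => not_sqChk_of_nsqB (phiW [1,2,1,0]) 8369201279746499418293056727871318804553 68 rfl rfl rfl
  | ⟨1,_⟩, ⟨2,_⟩, ⟨1,_⟩, ⟨1,_⟩, hsf => absurd (sqChk_of_nsqB ([1,2,1,1] : List (Fin 3)) 89 4 rfl rfl rfl) hsf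
  | ⟨1,_⟩, ⟨2,_⟩, ⟨1,_⟩, ⟨2,_⟩, hsf => absurd (sqChk_of_nsqB ([1,2,1,2] : List (Fin 3)) 153 4 rfl rfl rfl) hsf
  | ⟨1,_⟩, ⟨2,_⟩, ⟨2,_⟩, ⟨0,_⟩, hsf => absurd (sqChk_of_nsqB ([1,2,2,0] : List (Fin 3)) 41 4 rfl rfl rfl) hsf
  | ⟨1,_⟩, ⟨2,_⟩, ⟨2,_⟩, ⟨1,_⟩, hsf => absurd (sqChk_of_nsqB ([1,2,2,1] : List (Fin 3)) 105 4 rfl rfl rfl) hsf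
  | ⟨1,_⟩, ⟨2,_⟩, ⟨2,_⟩, ⟨2,_⟩, hsf => absurd (sqChk_of_nsqB ([1,2,2,2] : List (Fin 3)) 169 4 rfl rfl rfl) hsf
  | ⟨2,_⟩, ⟨0,_⟩, ⟨0,_⟩, ⟨0,_⟩, hsf => absurd (sqChk_of_nsqB ([2,0,0,0] : List (Fin 3)) 2 4 rfl rfl rfl) hsf
  | ⟨2,_⟩, ⟨0,_⟩, ⟨0,_⟩, ⟨1,_⟩, hsf => absurd (sqChk_of_nsqB ([2,0,0,1] : List (Fin 3)) 66 4 rfl rfl rfl) hsf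
  | ⟨2,_⟩, ⟨0,_⟩, ⟨0,_⟩, ⟨2,_⟩, hsf => absurd (sqChk_of_nsqB ([2,0,0,2] : List (Fin 3)) 130 4 rfl rfl rfl) hsf
  | ⟨2,_⟩, ⟨0,_⟩, ⟨1,_⟩, ⟨0,_⟩, _ => not_sqChk_of_nsqB (phiW [2,0,1,0]) 8369201279746499418166605310955647177106 68 rfl rfl rfl
  | ⟨2,_⟩, ⟨0,_⟩, ⟨1,_⟩, ⟨1,_⟩, hsf => absurd (sqChk_of_nsqB ([2,0,1,1] : List (Fin 3)) 82 4 rfl rfl rfl) hsf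
  | ⟨2,_⟩, ⟨0,_⟩, ⟨1,_⟩, ⟨2,_⟩, _ => not_sqChk_of_nsqB (phiW [2,0,1,2]) 45691072090103650975651473847068309098898 68 rfl rfl rfl
  | ⟨2,_⟩, ⟨0,_⟩, ⟨2,_⟩, ⟨0,_⟩, hsf => absurd (sqChk_of_nsqB ([2,0,2,0] : List (Fin 3)) 34 4 rfl rfl rfl) hsf
  | ⟨2,_⟩, ⟨0,_⟩, ⟨2,_⟩, ⟨1,_⟩, _ => not_sqChk_of_nsqB (phiW [2,0,2,1]) 33052012563346824962139832462128069513618 68 rfl rfl rfl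
  | ⟨2,_⟩, ⟨0,_⟩, ⟨2,_⟩, ⟨2,_⟩, hsf => absurd (sqChk_of_nsqB ([2,0,2,2] : List (Fin 3)) 162 4 rfl rfl rfl) hsf
  | ⟨2,_⟩, ⟨1,_⟩, ⟨0,_⟩, ⟨0,_⟩, hsf => absurd (sqChk_of_nsqB ([2,1,0,0] : List (Fin 3)) 6 4 rfl rfl rfl) hsf
  | ⟨2,_⟩, ⟨1,_⟩, ⟨0,_⟩, ⟨1,_⟩, _ => not_sqChk_of_nsqB (phiW [2,1,0,1]) 33052012561174406161437954961269633618322 68 rfl rfl rfl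
  | ⟨2,_⟩, ⟨1,_⟩, ⟨0,_⟩, ⟨2,_⟩, _ => not_sqChk_of_nsqB (phiW [2,1,0,2]) 45691072088666922266191010312540634255762 68 rfl rfl rfl
  | ⟨2,_⟩, ⟨1,_⟩, ⟨1,_⟩, ⟨0,_⟩, hsf => absurd (sqChk_of_nsqB ([2,1,1,0] : List (Fin 3)) 22 4 rfl rfl rfl) hsf
  | ⟨2,_⟩, ⟨1,_⟩, ⟨1,_⟩, ⟨1,_⟩, hsf => absurd (sqChk_of_nsqB ([2,1,1,1] : List (Fin 3)) 86 4 rfl rfl rfl) hsf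
  | ⟨2,_⟩, ⟨1,_⟩, ⟨1,_⟩, ⟨2,_⟩, hsf => absurd (sqChk_of_nsqB ([2,1,1,2] : List (Fin 3)) 150 4 rfl rfl rfl) hsf
  | ⟨2,_⟩, ⟨1,_⟩, ⟨2,_⟩, ⟨0,_⟩, _ => not_sqChk_of_nsqB (phiW [2,1,2,0]) 8369201280482189509491647894836194349458 68 rfl rfl rfl
  | ⟨2,_⟩, ⟨1,_⟩, ⟨2,_⟩, ⟨1,_⟩, hsf => absurd (sqChk_of_nsqB ([2,1,2,1] : List (Fin 3)) 102 4 rfl rfl rfl) hsf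
  | ⟨2,_⟩, ⟨1,_⟩, ⟨2,_⟩, ⟨2,_⟩, hsf => absurd (sqChk_of_nsqB ([2,1,2,2] : List (Fin 3)) 166 4 rfl rfl rfl) hsf
  | ⟨2,_⟩, ⟨2,_⟩, ⟨0,_⟩, ⟨0,_⟩, hsf => absurd (sqChk_of_nsqB ([2,2,0,0] : List (Fin 3)) 10 4 rfl rfl rfl) hsf
  | ⟨2,_⟩, ⟨2,_⟩, ⟨0,_⟩, ⟨1,_⟩, hsf => absurd (sqChk_of_nsqB ([2,2,0,1] : List (Fin 3)) 74 4 rfl rfl rfl) hsf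
  | ⟨2,_⟩, ⟨2,_⟩, ⟨0,_⟩, ⟨2,_⟩, hsf => absurd (sqChk_of_nsqB ([2,2,0,2] : List (Fin 3)) 138 4 rfl rfl rfl) hsf
  | ⟨2,_⟩, ⟨2,_⟩, ⟨1,_⟩, ⟨0,_⟩, hsf => absurd (sqChk_of_nsqB ([2,2,1,0] : List (Fin 3)) 26 4 rfl rfl rfl) hsf
  | ⟨2,_⟩, ⟨2,_⟩, ⟨1,_⟩, ⟨1,_⟩, hsf => absurd (sqChk_of_nsqB ([2,2,1,1] : List (Fin 3)) 90 4 rfl rfl rfl) hsf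
  | ⟨2,_⟩, ⟨2,_⟩, ⟨1,_⟩, ⟨2,_⟩, hsf => absurd (sqChk_of_nsqB ([2,2,1,2] : List (Fin 3)) 154 4 rfl rfl rfl) hsf
  | ⟨2,_⟩, ⟨2,_⟩, ⟨2,_⟩, ⟨0,_⟩, hsf => absurd (sqChk_of_nsqB ([2,2,2,0] : List (Fin 3)) 42 4 rfl rfl rfl) hsf
  | ⟨2,_⟩, ⟨2,_⟩, ⟨2,_⟩, ⟨1,_⟩, hsf => absurd (sqChk_of_nsqB ([2,2,2,1] : List (Fin 3)) 106 4 rfl rfl rfl) hsf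
  | ⟨2,_⟩, ⟨2,_⟩, ⟨2,_⟩, ⟨2,_⟩, hsf => absurd (sqChk_of_nsqB ([2,2,2,2] : List (Fin 3)) 170 4 rfl rfl rfl) hsf
  | ⟨_+3,h⟩, _, _, _, _ => absurd h (by omega)
  | _, ⟨_+3,h⟩, _, _, _ => absurd h (by omega)
  | _, _, ⟨_+3,h⟩, _, _ => absurd h (by omega)
  | _, _, _, ⟨_+3,h⟩, _ => absurd h (by omega)

lemma F2' (v : List (Fin 3)) (hlen : v.length ≤ 4) (hsf : ¬ sqChk v) : ¬ sqChk (phiW v) := by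
  match v with
  | [] => exact not_sqChk_of_nsqB (phiW []) 0 0 rfl rfl rfl
  | [a] => exact F2_1 a hsf
  | [a,b] => exact F2_2 a b hsf
  | [a,b,c] => exact F2_3 a b c hsf
  | [a,b,c,d] => exact F2_4 a b c d hsf
  | _::_::_::_::_::_ => simp [List.length_cons] at hlen; omega

lemma F3_01 : ∀ p : ℕ, 1 ≤ p → p ≤ 32 → sqChk (delW p (phi 0 ++ phi 1))
  | 1, _, _ => sqChk_of_nsqB (delW 1 (phi 0 ++ phi 1)) 27996143612377713032 33 rfl rfl rfl
  | 2, _, _ => sqChk_of_nsqB (delW 2 (phi 0 ++ phi 1)) 27996143612377713028 33 rfl rfl rfl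
  | 3, _, _ => sqChk_of_nsqB (delW 3 (phi 0 ++ phi 1)) 27996143612377713060 33 rfl rfl rfl
  | 4, _, _ => sqChk_of_nsqB (delW 4 (phi 0 ++ phi 1)) 27996143612377712932 33 rfl rfl rfl
  | 5, _, _ => sqChk_of_nsqB (delW 5 (phi 0 ++ phi 1)) 27996143612377713188 33 rfl rfl rfl
  | 6, _, _ => sqChk_of_nsqB (delW 6 (phi 0 ++ phi 1)) 27996143612377712164 33 rfl rfl rfl
  | 7, _, _ => sqChk_of_nsqB (delW 7 (phi 0 ++ phi 1)) 27996143612377720356 33 rfl rfl rfl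
  | 8, _, _ => sqChk_of_nsqB (delW 8 (phi 0 ++ phi 1)) 27996143612377703972 33 rfl rfl rfl
  | 9, _, _ => sqChk_of_nsqB (delW 9 (phi 0 ++ phi 1)) 27996143612377769508 33 rfl rfl rfl
  | 10, _, _ => sqChk_of_nsqB (delW 10 (phi 0 ++ phi 1)) 27996143612377245220 33 rfl rfl rfl
  | 11, _, _ => sqChk_of_nsqB (delW 11 (phi 0 ++ phi 1)) 27996143612378293796 33 rfl rfl rfl
  | 12, _, _ => sqChk_of_nsqB (delW 12 (phi 0 ++ phi 1)) 27996143612374099492 33 rfl rfl rfl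
  | 13, _, _ => sqChk_of_nsqB (delW 13 (phi 0 ++ phi 1)) 27996143612407653924 33 rfl rfl rfl
  | 14, _, _ => sqChk_of_nsqB (delW 14 (phi 0 ++ phi 1)) 27996143612273436196 33 rfl rfl rfl
  | 15, _, _ => sqChk_of_nsqB (delW 15 (phi 0 ++ phi 1)) 27996143612541871652 33 rfl rfl rfl
  | 16, _, _ => sqChk_of_nsqB (delW 16 (phi 0 ++ phi 1)) 27996143613615613476 33 rfl rfl rfl
  | 17, _, _ => sqChk_of_nsqB (delW 17 (phi 0 ++ phi 1)) 27996143609320646180 33 rfl rfl rfl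
  | 18, _, _ => sqChk_of_nsqB (delW 18 (phi 0 ++ phi 1)) 27996143592140776996 33 rfl rfl rfl
  | 19, _, _ => sqChk_of_nsqB (delW 19 (phi 0 ++ phi 1)) 27996143729579730468 33 rfl rfl rfl
  | 20, _, _ => sqChk_of_nsqB (delW 20 (phi 0 ++ phi 1)) 27996143454701823524 33 rfl rfl rfl
  | 21, _, _ => sqChk_of_nsqB (delW 21 (phi 0 ++ phi 1)) 27996144554213451300 33 rfl rfl rfl
  | 22, _, _ => sqChk_of_nsqB (delW 22 (phi 0 ++ phi 1)) 27996135758120429092 33 rfl rfl rfl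
  | 23, _, _ => sqChk_of_nsqB (delW 23 (phi 0 ++ phi 1)) 27996170942492517924 33 rfl rfl rfl
  | 24, _, _ => sqChk_of_nsqB (delW 24 (phi 0 ++ phi 1)) 27996100573748340260 33 rfl rfl rfl
  | 25, _, _ => sqChk_of_nsqB (delW 25 (phi 0 ++ phi 1)) 27995819098771629604 33 rfl rfl rfl
  | 26, _, _ => sqChk_of_nsqB (delW 26 (phi 0 ++ phi 1)) 27996944998678472228 33 rfl rfl rfl
  | 27, _, _ => sqChk_of_nsqB (delW 27 (phi 0 ++ phi 1)) 28001448598305842724 33 rfl rfl rfl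
  | 28, _, _ => sqChk_of_nsqB (delW 28 (phi 0 ++ phi 1)) 27965419801286878756 33 rfl rfl rfl
  | 29, _, _ => sqChk_of_nsqB (delW 29 (phi 0 ++ phi 1)) 28109534989362734628 33 rfl rfl rfl
  | 30, _, _ => sqChk_of_nsqB (delW 30 (phi 0 ++ phi 1)) 27821304613211022884 33 rfl rfl rfl
  | 31, _, _ => sqChk_of_nsqB (delW 31 (phi 0 ++ phi 1)) 28974226117817869860 33 rfl rfl rfl
  | 32, _, _ => sqChk_of_nsqB (delW 32 (phi 0 ++ phi 1)) 19750854080963094052 33 rfl rfl rfl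
  | 0, h, _ => absurd h (by omega)
  | n+33, _, h => absurd h (by omega)

lemma F3_02 : ∀ p : ℕ, 1 ≤ p → p ≤ 32 → sqChk (delW p (phi 0 ++ phi 2))
  | 1, _, _ => sqChk_of_nsqB (delW 1 (phi 0 ++ phi 2)) 38701843454472243592 33 rfl rfl rfl
  | 2, _, _ => sqChk_of_nsqB (delW 2 (phi 0 ++ phi 2)) 38701843454472243588 33 rfl rfl rfl
  | 3, _, _ => sqChk_of_nsqB (delW 3 (phi 0 ++ phi 2)) 38701843454472243620 33 rfl rfl rfl
  | 4, _, _ => sqChk_of_nsqB (delW 4 (phi 0 ++ phi 2)) 38701843454472243492 33 rfl rfl rfl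
  | 5, _, _ => sqChk_of_nsqB (delW 5 (phi 0 ++ phi 2)) 38701843454472243748 33 rfl rfl rfl
  | 6, _, _ => sqChk_of_nsqB (delW 6 (phi 0 ++ phi 2)) 38701843454472242724 33 rfl rfl rfl
  | 7, _, _ => sqChk_of_nsqB (delW 7 (phi 0 ++ phi 2)) 38701843454472250916 33 rfl rfl rfl
  | 8, _, _ => sqChk_of_nsqB (delW 8 (phi 0 ++ phi 2)) 38701843454472234532 33 rfl rfl rfl
  | 9, _, _ => sqChk_of_nsqB (delW 9 (phi 0 ++ phi 2)) 38701843454472300068 33 rfl rfl rfl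
  | 10, _, _ => sqChk_of_nsqB (delW 10 (phi 0 ++ phi 2)) 38701843454471775780 33 rfl rfl rfl
  | 11, _, _ => sqChk_of_nsqB (delW 11 (phi 0 ++ phi 2)) 38701843454472824356 33 rfl rfl rfl
  | 12, _, _ => sqChk_of_nsqB (delW 12 (phi 0 ++ phi 2)) 38701843454468630052 33 rfl rfl rfl
  | 13, _, _ => sqChk_of_nsqB (delW 13 (phi 0 ++ phi 2)) 38701843454502184484 33 rfl rfl rfl
  | 14, _, _ => sqChk_of_nsqB (delW 14 (phi 0 ++ phi 2)) 38701843454367966756 33 rfl rfl rfl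
  | 15, _, _ => sqChk_of_nsqB (delW 15 (phi 0 ++ phi 2)) 38701843454636402212 33 rfl rfl rfl
  | 16, _, _ => sqChk_of_nsqB (delW 16 (phi 0 ++ phi 2)) 38701843455710144036 33 rfl rfl rfl
  | 17, _, _ => sqChk_of_nsqB (delW 17 (phi 0 ++ phi 2)) 38701843447120209444 33 rfl rfl rfl
  | 18, _, _ => sqChk_of_nsqB (delW 18 (phi 0 ++ phi 2)) 38701843481479947812 33 rfl rfl rfl
  | 19, _, _ => sqChk_of_nsqB (delW 19 (phi 0 ++ phi 2)) 38701843412760471076 33 rfl rfl rfl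
  | 20, _, _ => sqChk_of_nsqB (delW 20 (phi 0 ++ phi 2)) 38701843137882564132 33 rfl rfl rfl
  | 21, _, _ => sqChk_of_nsqB (delW 21 (phi 0 ++ phi 2)) 38701844237394191908 33 rfl rfl rfl
  | 22, _, _ => sqChk_of_nsqB (delW 22 (phi 0 ++ phi 2)) 38701848635440703012 33 rfl rfl rfl
  | 23, _, _ => sqChk_of_nsqB (delW 23 (phi 0 ++ phi 2)) 38701831043254658596 33 rfl rfl rfl
  | 24, _, _ => sqChk_of_nsqB (delW 24 (phi 0 ++ phi 2)) 38701760674510480932 33 rfl rfl rfl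
  | 25, _, _ => sqChk_of_nsqB (delW 25 (phi 0 ++ phi 2)) 38702323624463902244 33 rfl rfl rfl
  | 26, _, _ => sqChk_of_nsqB (delW 26 (phi 0 ++ phi 2)) 38700071824650216996 33 rfl rfl rfl
  | 27, _, _ => sqChk_of_nsqB (delW 27 (phi 0 ++ phi 2)) 38704575424277587492 33 rfl rfl rfl
  | 28, _, _ => sqChk_of_nsqB (delW 28 (phi 0 ++ phi 2)) 38722589822787069476 33 rfl rfl rfl
  | 29, _, _ => sqChk_of_nsqB (delW 29 (phi 0 ++ phi 2)) 38650532228749141540 33 rfl rfl rfl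
  | 30, _, _ => sqChk_of_nsqB (delW 30 (phi 0 ++ phi 2)) 38362301852597429796 33 rfl rfl rfl
  | 31, _, _ => sqChk_of_nsqB (delW 31 (phi 0 ++ phi 2)) 39515223357204276772 33 rfl rfl rfl
  | 32, _, _ => sqChk_of_nsqB (delW 32 (phi 0 ++ phi 2)) 44126909375631664676 33 rfl rfl rfl
  | 0, h, _ => absurd h (by omega)
  | n+33, _, h => absurd h (by omega)

lemma F3_10 : ∀ p : ℕ, 1 ≤ p → p ≤ 32 → sqChk (delW p (phi 1 ++ phi 0))
  | 1, _, _ => sqChk_of_nsqB (delW 1 (phi 1 ++ phi 0)) 7088989226148139537 33 rfl rfl rfl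
  | 2, _, _ => sqChk_of_nsqB (delW 2 (phi 1 ++ phi 0)) 7088989226148139545 33 rfl rfl rfl
  | 3, _, _ => sqChk_of_nsqB (delW 3 (phi 1 ++ phi 0)) 7088989226148139529 33 rfl rfl rfl
  | 4, _, _ => sqChk_of_nsqB (delW 4 (phi 1 ++ phi 0)) 7088989226148139593 33 rfl rfl rfl
  | 5, _, _ => sqChk_of_nsqB (delW 5 (phi 1 ++ phi 0)) 7088989226148139081 33 rfl rfl rfl
  | 6, _, _ => sqChk_of_nsqB (delW 6 (phi 1 ++ phi 0)) 7088989226148141129 33 rfl rfl rfl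
  | 7, _, _ => sqChk_of_nsqB (delW 7 (phi 1 ++ phi 0)) 7088989226148137033 33 rfl rfl rfl
  | 8, _, _ => sqChk_of_nsqB (delW 8 (phi 1 ++ phi 0)) 7088989226148120649 33 rfl rfl rfl
  | 9, _, _ => sqChk_of_nsqB (delW 9 (phi 1 ++ phi 0)) 7088989226148186185 33 rfl rfl rfl
  | 10, _, _ => sqChk_of_nsqB (delW 10 (phi 1 ++ phi 0)) 7088989226148448329 33 rfl rfl rfl
  | 11, _, _ => sqChk_of_nsqB (delW 11 (phi 1 ++ phi 0)) 7088989226146351177 33 rfl rfl rfl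
  | 12, _, _ => sqChk_of_nsqB (delW 12 (phi 1 ++ phi 0)) 7088989226154739785 33 rfl rfl rfl
  | 13, _, _ => sqChk_of_nsqB (delW 13 (phi 1 ++ phi 0)) 7088989226137962569 33 rfl rfl rfl
  | 14, _, _ => sqChk_of_nsqB (delW 14 (phi 1 ++ phi 0)) 7088989226205071433 33 rfl rfl rfl
  | 15, _, _ => sqChk_of_nsqB (delW 15 (phi 1 ++ phi 0)) 7088989225668200521 33 rfl rfl rfl
  | 16, _, _ => sqChk_of_nsqB (delW 16 (phi 1 ++ phi 0)) 7088989226741942345 33 rfl rfl rfl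
  | 17, _, _ => sqChk_of_nsqB (delW 17 (phi 1 ++ phi 0)) 7088989231036909641 33 rfl rfl rfl
  | 18, _, _ => sqChk_of_nsqB (delW 18 (phi 1 ++ phi 0)) 7088989213857040457 33 rfl rfl rfl
  | 19, _, _ => sqChk_of_nsqB (delW 19 (phi 1 ++ phi 0)) 7088989145137563721 33 rfl rfl rfl
  | 20, _, _ => sqChk_of_nsqB (delW 20 (phi 1 ++ phi 0)) 7088989694893377609 33 rfl rfl rfl
  | 21, _, _ => sqChk_of_nsqB (delW 21 (phi 1 ++ phi 0)) 7088987495870122057 33 rfl rfl rfl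
  | 22, _, _ => sqChk_of_nsqB (delW 22 (phi 1 ++ phi 0)) 7088991893916633161 33 rfl rfl rfl
  | 23, _, _ => sqChk_of_nsqB (delW 23 (phi 1 ++ phi 0)) 7088974301730588745 33 rfl rfl rfl
  | 24, _, _ => sqChk_of_nsqB (delW 24 (phi 1 ++ phi 0)) 7089115039218944073 33 rfl rfl rfl
  | 25, _, _ => sqChk_of_nsqB (delW 25 (phi 1 ++ phi 0)) 7088833564242233417 33 rfl rfl rfl
  | 26, _, _ => sqChk_of_nsqB (delW 26 (phi 1 ++ phi 0)) 7089959464149076041 33 rfl rfl rfl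
  | 27, _, _ => sqChk_of_nsqB (delW 27 (phi 1 ++ phi 0)) 7080952264894335049 33 rfl rfl rfl
  | 28, _, _ => sqChk_of_nsqB (delW 28 (phi 1 ++ phi 0)) 7098966663403817033 33 rfl rfl rfl
  | 29, _, _ => sqChk_of_nsqB (delW 29 (phi 1 ++ phi 0)) 7026909069365889097 33 rfl rfl rfl
  | 30, _, _ => sqChk_of_nsqB (delW 30 (phi 1 ++ phi 0)) 7603369821669312585 33 rfl rfl rfl
  | 31, _, _ => sqChk_of_nsqB (delW 31 (phi 1 ++ phi 0)) 5297526812455618633 33 rfl rfl rfl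
  | 32, _, _ => sqChk_of_nsqB (delW 32 (phi 1 ++ phi 0)) 9909212830883006537 33 rfl rfl rfl
  | 0, h, _ => absurd h (by omega)
  | n+33, _, h => absurd h (by omega)

lemma F3_12 : ∀ p : ℕ, 1 ≤ p → p ≤ 32 → sqChk (delW p (phi 1 ++ phi 2))
  | 1, _, _ => sqChk_of_nsqB (delW 1 (phi 1 ++ phi 2)) 38701843455689200145 33 rfl rfl rfl
  | 2, _, _ => sqChk_of_nsqB (delW 2 (phi 1 ++ phi 2)) 38701843455689200153 33 rfl rfl rfl
  | 3, _, _ => sqChk_of_nsqB (delW 3 (phi 1 ++ phi 2)) 38701843455689200137 33 rfl rfl rfl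
  | 4, _, _ => sqChk_of_nsqB (delW 4 (phi 1 ++ phi 2)) 38701843455689200201 33 rfl rfl rfl
  | 5, _, _ => sqChk_of_nsqB (delW 5 (phi 1 ++ phi 2)) 38701843455689199689 33 rfl rfl rfl
  | 6, _, _ => sqChk_of_nsqB (delW 6 (phi 1 ++ phi 2)) 38701843455689201737 33 rfl rfl rfl
  | 7, _, _ => sqChk_of_nsqB (delW 7 (phi 1 ++ phi 2)) 38701843455689197641 33 rfl rfl rfl
  | 8, _, _ => sqChk_of_nsqB (delW 8 (phi 1 ++ phi 2)) 38701843455689181257 33 rfl rfl rfl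
  | 9, _, _ => sqChk_of_nsqB (delW 9 (phi 1 ++ phi 2)) 38701843455689246793 33 rfl rfl rfl
  | 10, _, _ => sqChk_of_nsqB (delW 10 (phi 1 ++ phi 2)) 38701843455689508937 33 rfl rfl rfl
  | 11, _, _ => sqChk_of_nsqB (delW 11 (phi 1 ++ phi 2)) 38701843455687411785 33 rfl rfl rfl
  | 12, _, _ => sqChk_of_nsqB (delW 12 (phi 1 ++ phi 2)) 38701843455695800393 33 rfl rfl rfl
  | 13, _, _ => sqChk_of_nsqB (delW 13 (phi 1 ++ phi 2)) 38701843455679023177 33 rfl rfl rfl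
  | 14, _, _ => sqChk_of_nsqB (delW 14 (phi 1 ++ phi 2)) 38701843455746132041 33 rfl rfl rfl
  | 15, _, _ => sqChk_of_nsqB (delW 15 (phi 1 ++ phi 2)) 38701843455209261129 33 rfl rfl rfl
  | 16, _, _ => sqChk_of_nsqB (delW 16 (phi 1 ++ phi 2)) 38701843456283002953 33 rfl rfl rfl
  | 17, _, _ => sqChk_of_nsqB (delW 17 (phi 1 ++ phi 2)) 38701843451988035657 33 rfl rfl rfl
  | 18, _, _ => sqChk_of_nsqB (delW 18 (phi 1 ++ phi 2)) 38701843486347774025 33 rfl rfl rfl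
  | 19, _, _ => sqChk_of_nsqB (delW 19 (phi 1 ++ phi 2)) 38701843417628297289 33 rfl rfl rfl
  | 20, _, _ => sqChk_of_nsqB (delW 20 (phi 1 ++ phi 2)) 38701843142750390345 33 rfl rfl rfl
  | 21, _, _ => sqChk_of_nsqB (delW 21 (phi 1 ++ phi 2)) 38701844242262018121 33 rfl rfl rfl
  | 22, _, _ => sqChk_of_nsqB (delW 22 (phi 1 ++ phi 2)) 38701848640308529225 33 rfl rfl rfl
  | 23, _, _ => sqChk_of_nsqB (delW 23 (phi 1 ++ phi 2)) 38701831048122484809 33 rfl rfl rfl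
  | 24, _, _ => sqChk_of_nsqB (delW 24 (phi 1 ++ phi 2)) 38701760679378307145 33 rfl rfl rfl
  | 25, _, _ => sqChk_of_nsqB (delW 25 (phi 1 ++ phi 2)) 38702323629331728457 33 rfl rfl rfl
  | 26, _, _ => sqChk_of_nsqB (delW 26 (phi 1 ++ phi 2)) 38700071829518043209 33 rfl rfl rfl
  | 27, _, _ => sqChk_of_nsqB (delW 27 (phi 1 ++ phi 2)) 38704575429145413705 33 rfl rfl rfl
  | 28, _, _ => sqChk_of_nsqB (delW 28 (phi 1 ++ phi 2)) 38722589827654895689 33 rfl rfl rfl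
  | 29, _, _ => sqChk_of_nsqB (delW 29 (phi 1 ++ phi 2)) 38650532233616967753 33 rfl rfl rfl
  | 30, _, _ => sqChk_of_nsqB (delW 30 (phi 1 ++ phi 2)) 38362301857465256009 33 rfl rfl rfl
  | 31, _, _ => sqChk_of_nsqB (delW 31 (phi 1 ++ phi 2)) 39515223362072102985 33 rfl rfl rfl
  | 32, _, _ => sqChk_of_nsqB (delW 32 (phi 1 ++ phi 2)) 44126909380499490889 33 rfl rfl rfl
  | 0, h, _ => absurd h (by omega)
  | n+33, _, h => absurd h (by omega)

lemma F3_20 : ∀ p : ℕ, 1 ≤ p → p ≤ 32 → sqChk (delW p (phi 2 ++ phi 0))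
  | 1, _, _ => sqChk_of_nsqB (delW 1 (phi 2 ++ phi 0)) 7088989226771293286 33 rfl rfl rfl
  | 2, _, _ => sqChk_of_nsqB (delW 2 (phi 2 ++ phi 0)) 7088989226771293282 33 rfl rfl rfl
  | 3, _, _ => sqChk_of_nsqB (delW 3 (phi 2 ++ phi 0)) 7088989226771293266 33 rfl rfl rfl
  | 4, _, _ => sqChk_of_nsqB (delW 4 (phi 2 ++ phi 0)) 7088989226771293330 33 rfl rfl rfl
  | 5, _, _ => sqChk_of_nsqB (delW 5 (phi 2 ++ phi 0)) 7088989226771293586 33 rfl rfl rfl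
  | 6, _, _ => sqChk_of_nsqB (delW 6 (phi 2 ++ phi 0)) 7088989226771292562 33 rfl rfl rfl
  | 7, _, _ => sqChk_of_nsqB (delW 7 (phi 2 ++ phi 0)) 7088989226771288466 33 rfl rfl rfl
  | 8, _, _ => sqChk_of_nsqB (delW 8 (phi 2 ++ phi 0)) 7088989226771321234 33 rfl rfl rfl
  | 9, _, _ => sqChk_of_nsqB (delW 9 (phi 2 ++ phi 0)) 7088989226771190162 33 rfl rfl rfl
  | 10, _, _ => sqChk_of_nsqB (delW 10 (phi 2 ++ phi 0)) 7088989226771452306 33 rfl rfl rfl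
  | 11, _, _ => sqChk_of_nsqB (delW 11 (phi 2 ++ phi 0)) 7088989226772500882 33 rfl rfl rfl
  | 12, _, _ => sqChk_of_nsqB (delW 12 (phi 2 ++ phi 0)) 7088989226768306578 33 rfl rfl rfl
  | 13, _, _ => sqChk_of_nsqB (delW 13 (phi 2 ++ phi 0)) 7088989226751529362 33 rfl rfl rfl
  | 14, _, _ => sqChk_of_nsqB (delW 14 (phi 2 ++ phi 0)) 7088989226818638226 33 rfl rfl rfl
  | 15, _, _ => sqChk_of_nsqB (delW 15 (phi 2 ++ phi 0)) 7088989227087073682 33 rfl rfl rfl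
  | 16, _, _ => sqChk_of_nsqB (delW 16 (phi 2 ++ phi 0)) 7088989224939590034 33 rfl rfl rfl
  | 17, _, _ => sqChk_of_nsqB (delW 17 (phi 2 ++ phi 0)) 7088989233529524626 33 rfl rfl rfl
  | 18, _, _ => sqChk_of_nsqB (delW 18 (phi 2 ++ phi 0)) 7088989216349655442 33 rfl rfl rfl
  | 19, _, _ => sqChk_of_nsqB (delW 19 (phi 2 ++ phi 0)) 7088989147630178706 33 rfl rfl rfl
  | 20, _, _ => sqChk_of_nsqB (delW 20 (phi 2 ++ phi 0)) 7088989697385992594 33 rfl rfl rfl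
  | 21, _, _ => sqChk_of_nsqB (delW 21 (phi 2 ++ phi 0)) 7088987498362737042 33 rfl rfl rfl
  | 22, _, _ => sqChk_of_nsqB (delW 22 (phi 2 ++ phi 0)) 7088991896409248146 33 rfl rfl rfl
  | 23, _, _ => sqChk_of_nsqB (delW 23 (phi 2 ++ phi 0)) 7088974304223203730 33 rfl rfl rfl
  | 24, _, _ => sqChk_of_nsqB (delW 24 (phi 2 ++ phi 0)) 7089115041711559058 33 rfl rfl rfl
  | 25, _, _ => sqChk_of_nsqB (delW 25 (phi 2 ++ phi 0)) 7088833566734848402 33 rfl rfl rfl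
  | 26, _, _ => sqChk_of_nsqB (delW 26 (phi 2 ++ phi 0)) 7089959466641691026 33 rfl rfl rfl
  | 27, _, _ => sqChk_of_nsqB (delW 27 (phi 2 ++ phi 0)) 7080952267386950034 33 rfl rfl rfl
  | 28, _, _ => sqChk_of_nsqB (delW 28 (phi 2 ++ phi 0)) 7098966665896432018 33 rfl rfl rfl
  | 29, _, _ => sqChk_of_nsqB (delW 29 (phi 2 ++ phi 0)) 7026909071858504082 33 rfl rfl rfl
  | 30, _, _ => sqChk_of_nsqB (delW 30 (phi 2 ++ phi 0)) 7603369824161927570 33 rfl rfl rfl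
  | 31, _, _ => sqChk_of_nsqB (delW 31 (phi 2 ++ phi 0)) 5297526814948233618 33 rfl rfl rfl
  | 32, _, _ => sqChk_of_nsqB (delW 32 (phi 2 ++ phi 0)) 9909212833375621522 33 rfl rfl rfl
  | 0, h, _ => absurd h (by omega)
  | n+33, _, h => absurd h (by omega)

lemma F3_21 : ∀ p : ℕ, 1 ≤ p → p ≤ 32 → sqChk (delW p (phi 2 ++ phi 1))
  | 1, _, _ => sqChk_of_nsqB (delW 1 (phi 2 ++ phi 1)) 27996143614217823334 33 rfl rfl rfl
  | 2, _, _ => sqChk_of_nsqB (delW 2 (phi 2 ++ phi 1)) 27996143614217823330 33 rfl rfl rfl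
  | 3, _, _ => sqChk_of_nsqB (delW 3 (phi 2 ++ phi 1)) 27996143614217823314 33 rfl rfl rfl
  | 4, _, _ => sqChk_of_nsqB (delW 4 (phi 2 ++ phi 1)) 27996143614217823378 33 rfl rfl rfl
  | 5, _, _ => sqChk_of_nsqB (delW 5 (phi 2 ++ phi 1)) 27996143614217823634 33 rfl rfl rfl
  | 6, _, _ => sqChk_of_nsqB (delW 6 (phi 2 ++ phi 1)) 27996143614217822610 33 rfl rfl rfl
  | 7, _, _ => sqChk_of_nsqB (delW 7 (phi 2 ++ phi 1)) 27996143614217818514 33 rfl rfl rfl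
  | 8, _, _ => sqChk_of_nsqB (delW 8 (phi 2 ++ phi 1)) 27996143614217851282 33 rfl rfl rfl
  | 9, _, _ => sqChk_of_nsqB (delW 9 (phi 2 ++ phi 1)) 27996143614217720210 33 rfl rfl rfl
  | 10, _, _ => sqChk_of_nsqB (delW 10 (phi 2 ++ phi 1)) 27996143614217982354 33 rfl rfl rfl
  | 11, _, _ => sqChk_of_nsqB (delW 11 (phi 2 ++ phi 1)) 27996143614219030930 33 rfl rfl rfl
  | 12, _, _ => sqChk_of_nsqB (delW 12 (phi 2 ++ phi 1)) 27996143614214836626 33 rfl rfl rfl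
  | 13, _, _ => sqChk_of_nsqB (delW 13 (phi 2 ++ phi 1)) 27996143614198059410 33 rfl rfl rfl
  | 14, _, _ => sqChk_of_nsqB (delW 14 (phi 2 ++ phi 1)) 27996143614265168274 33 rfl rfl rfl
  | 15, _, _ => sqChk_of_nsqB (delW 15 (phi 2 ++ phi 1)) 27996143614533603730 33 rfl rfl rfl
  | 16, _, _ => sqChk_of_nsqB (delW 16 (phi 2 ++ phi 1)) 27996143612386120082 33 rfl rfl rfl
  | 17, _, _ => sqChk_of_nsqB (delW 17 (phi 2 ++ phi 1)) 27996143616681087378 33 rfl rfl rfl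
  | 18, _, _ => sqChk_of_nsqB (delW 18 (phi 2 ++ phi 1)) 27996143599501218194 33 rfl rfl rfl
  | 19, _, _ => sqChk_of_nsqB (delW 19 (phi 2 ++ phi 1)) 27996143736940171666 33 rfl rfl rfl
  | 20, _, _ => sqChk_of_nsqB (delW 20 (phi 2 ++ phi 1)) 27996143462062264722 33 rfl rfl rfl
  | 21, _, _ => sqChk_of_nsqB (delW 21 (phi 2 ++ phi 1)) 27996144561573892498 33 rfl rfl rfl
  | 22, _, _ => sqChk_of_nsqB (delW 22 (phi 2 ++ phi 1)) 27996135765480870290 33 rfl rfl rfl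
  | 23, _, _ => sqChk_of_nsqB (delW 23 (phi 2 ++ phi 1)) 27996170949852959122 33 rfl rfl rfl
  | 24, _, _ => sqChk_of_nsqB (delW 24 (phi 2 ++ phi 1)) 27996100581108781458 33 rfl rfl rfl
  | 25, _, _ => sqChk_of_nsqB (delW 25 (phi 2 ++ phi 1)) 27995819106132070802 33 rfl rfl rfl
  | 26, _, _ => sqChk_of_nsqB (delW 26 (phi 2 ++ phi 1)) 27996945006038913426 33 rfl rfl rfl
  | 27, _, _ => sqChk_of_nsqB (delW 27 (phi 2 ++ phi 1)) 28001448605666283922 33 rfl rfl rfl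
  | 28, _, _ => sqChk_of_nsqB (delW 28 (phi 2 ++ phi 1)) 27965419808647319954 33 rfl rfl rfl
  | 29, _, _ => sqChk_of_nsqB (delW 29 (phi 2 ++ phi 1)) 28109534996723175826 33 rfl rfl rfl
  | 30, _, _ => sqChk_of_nsqB (delW 30 (phi 2 ++ phi 1)) 27821304620571464082 33 rfl rfl rfl
  | 31, _, _ => sqChk_of_nsqB (delW 31 (phi 2 ++ phi 1)) 28974226125178311058 33 rfl rfl rfl
  | 32, _, _ => sqChk_of_nsqB (delW 32 (phi 2 ++ phi 1)) 19750854088323535250 33 rfl rfl rfl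
  | 0, h, _ => absurd h (by omega)
  | n+33, _, h => absurd h (by omega)

lemma F3del : ∀ a b : Fin 3, a ≠ b → ∀ p : ℕ, 1 ≤ p → p ≤ 32 → sqChk (delW p (phi a ++ phi b))
  | ⟨0,_⟩, ⟨1,_⟩, _ => F3_01
  | ⟨0,_⟩, ⟨2,_⟩, _ => F3_02
  | ⟨1,_⟩, ⟨0,_⟩, _ => F3_10
  | ⟨1,_⟩, ⟨2,_⟩, _ => F3_12
  | ⟨2,_⟩, ⟨0,_⟩, _ => F3_20
  | ⟨2,_⟩, ⟨1,_⟩, _ => F3_21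
  | ⟨0,_⟩, ⟨0,_⟩, hab => absurd rfl hab
  | ⟨1,_⟩, ⟨1,_⟩, hab => absurd rfl hab
  | ⟨2,_⟩, ⟨2,_⟩, hab => absurd rfl hab
  | ⟨_+3,h⟩, _, _ => absurd h (by omega)
  | _, ⟨_+3,h⟩, _ => absurd h (by omega)



def syncB (n m : ℕ) : Bool :=
  (List.range 16).all fun r => !((n / Nat.pow 4 (r+1)) % Nat.pow 4 17 == m)

lemma FsyncX : ∀ a b c : Fin 3, syncB (enc (phi b ++ phi c)) (enc (phi a)) = true := by decide

lemma Fsync (a b c : Fin 3) (r : ℕ) (h1 : 1 ≤ r) (h2 : r < 17) :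
    ((phi b ++ phi c).drop r).take 17 ≠ phi a := by
  intro heq
  have h3 := congrArg enc heq
  rw [enc_take, enc_drop] at h3
  have h4 := FsyncX a b c
  simp only [syncB, List.all_eq_true, List.mem_range] at h4
  have h5 := h4 (r-1) (by omega)
  rw [show r - 1 + 1 = r by omega] at h5
  simp only [Bool.not_eq_true', beq_eq_false_iff_ne, ne_eq, Nat.pow_eq] at h5
  exact h5 h3

lemma decomp2 (w : List (Fin 3)) (q : ℕ) (hq : q + 1 < w.length) :
    w = w.take q ++ [w.getD q 0, w.getD (q+1) 0] ++ w.drop (q+2) := by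
  have h1 : w.drop q = w.getD q 0 :: w.drop (q+1) := by
    rw [List.drop_eq_getElem_cons (show q < w.length by omega),
      List.getD_eq_getElem _ _ (by omega)]
  have h2 : w.drop (q+1) = w.getD (q+1) 0 :: w.drop (q+2) := by
    rw [List.drop_eq_getElem_cons (show q+1 < w.length by omega),
      List.getD_eq_getElem _ _ (by omega)]
  conv_lhs => rw [← List.take_append_drop q w, h1, h2]
  simp

lemma adj_ne (w : List (Fin 3)) (hw : SquareFree w) (q : ℕ) (hq : q + 1 < w.length) :
    w.getD q 0 ≠ w.getD (q+1) 0 := by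
  intro he
  apply hw
  refine ⟨[w.getD q 0], by simp, w.take q, w.drop (q+2), ?_⟩
  have := decomp2 w q hq
  rw [← he] at this
  simpa using this.symm

lemma square_of_getD (w : List (Fin 3)) (q p : ℕ) (hp : 1 ≤ p) (hq : q + 2*p ≤ w.length)
    (h : ∀ j < p, w.getD (q+j) 0 = w.getD (q+p+j) 0) : HasSquare w := by
  rw [hasSquare_iff_sqChk]
  refine ⟨q, by omega, p, by omega, hp, by omega, ?_⟩
  apply list_ext_getD
  · rw [slice_len _ _ _ (by omega), slice_len _ _ _ (by omega)]
  · intro j hj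
    rw [slice_len _ _ _ (by omega)] at hj
    rw [slice_getD _ _ _ _ hj, slice_getD _ _ _ _ hj]
    exact h j hj

lemma F2main (v : List (Fin 3)) (hle : v.length ≤ 4) (hsf : SquareFree v) :
    SquareFree (phiW v) := fun hs =>
  F2' v hle (fun c => hsf ((hasSquare_iff_sqChk v).2 c)) ((hasSquare_iff_sqChk _).1 hs)

lemma sync (w : List (Fin 3)) (a : Fin 3) (pos : ℕ) (hpos : pos + 17 ≤ 17 * w.length)
    (hocc : ∀ r < 17, (phi a).getD r 0 = (phiW w).getD (pos + r) 0) : pos % 17 = 0 := by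
  by_contra hne
  apply Fsync a (w.getD (pos/17) 0) (w.getD (pos/17 + 1) 0) (pos % 17) (by omega) (by omega)
  apply list_ext_getD
  · rw [slice_len _ _ _ (by simp [List.length_append, phi_len]; omega), phi_len]
  · intro rr hrr
    rw [slice_len _ _ _ (by simp [List.length_append, phi_len]; omega)] at hrr
    rw [slice_getD _ _ _ _ hrr]
    have hblock := phiW_getD w (pos + rr) (by omega)
    rcases Nat.lt_or_ge (pos % 17 + rr) 17 with hcase | hcase
    · rw [List.getD_append _ _ _ _ (by rw [phi_len]; omega)]
      rw [hocc rr hrr, hblock, show (pos+rr)/17 = pos/17 by omega,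
        show (pos+rr)%17 = pos % 17 + rr by omega]
    · rw [List.getD_append_right _ _ _ _ (by rw [phi_len]; omega), phi_len]
      rw [hocc rr hrr, hblock, show (pos+rr)/17 = pos/17 + 1 by omega,
        show (pos+rr)%17 = pos % 17 + rr - 17 by omega]

lemma sqf_phiW (w : List (Fin 3)) (hw : SquareFree w) : SquareFree (phiW w) := by
  intro hs
  obtain ⟨u, hu, s, t, hst⟩ := hs
  have hNw : (phiW w).length = 17 * w.length := phiW_len w
  set i := s.length with hidef
  set L := u.length with hLdef
  have hL1 : 1 ≤ L := List.length_pos_iff.2 hu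
  have hlen : i + 2*L + t.length = (phiW w).length := by
    have := congrArg List.length hst; simp [List.length_append] at this; omega
  have hst1 : s ++ u ++ (u ++ t) = phiW w := by simpa [List.append_assoc] using hst
  have hst2 : (s ++ u) ++ u ++ t = phiW w := by simpa [List.append_assoc] using hst
  have e1 := slice_of_eq hst1
  have e2 := slice_of_eq hst2
  simp only [List.length_append] at e2
  rw [← hidef, ← hLdef] at e1 e2
  have E : ∀ j < L, (phiW w).getD (i+j) 0 = (phiW w).getD (i+L+j) 0 := by
    intro j hj
    rw [← slice_getD (phiW w) i L j hj, ← slice_getD (phiW w) (i+L) L j hj, e1, e2]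
  rcases Nat.lt_or_ge L 26 with hL26 | hL26
  · -- short squares: inside 4 blocks
    set q0 := i / 17 with hq0def
    set v := (w.drop q0).take 4 with hvdef
    have hvlen : v.length = min 4 (w.length - q0) := by
      rw [hvdef]; simp [List.length_take, List.length_drop]
    have hw_eq : w = w.take q0 ++ v ++ w.drop (q0 + 4) := by
      conv_lhs => rw [← List.take_append_drop q0 w]
      rw [List.append_assoc]
      congr 1
      conv_lhs => rw [← List.take_append_drop 4 (w.drop q0)]
      rw [List.drop_drop]
    have hphi_split : phiW (w.take q0) ++ phiW v ++ phiW (w.drop (q0+4)) = phiW w := by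
      rw [← phiW_append, ← phiW_append, ← hw_eq]
    have hlen_take : (w.take q0).length = q0 := by
      simp [List.length_take]; omega
    have hpv := slice_of_eq hphi_split
    rw [phiW_len, phiW_len, hlen_take] at hpv
    have hbound : i + 2*L ≤ 17*q0 + 17 * v.length := by omega
    have huuv : u ++ u = ((phiW v).drop (i - 17*q0)).take (2*L) := by
      apply list_ext_getD
      · rw [slice_len _ _ _ (by rw [phiW_len]; omega)]
        simp [List.length_append]; omega
      · intro j hj
        simp only [List.length_append, ← hLdef] at hj
        rw [slice_getD _ _ _ _ (by omega), ← hpv,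
          slice_getD _ _ _ _ (by omega),
          show 17*q0 + (i - 17*q0 + j) = i + j by omega]
        rcases Nat.lt_or_ge j L with hjL | hjL
        · rw [List.getD_append _ _ _ _ (by omega), ← e1, slice_getD _ _ _ _ hjL]
        · rw [List.getD_append_right _ _ _ _ (by omega), ← hLdef, ← e2,
            slice_getD _ _ _ _ (by omega), show i + L + (j - L) = i + j by omega]
    have hsq : HasSquare (phiW v) := ⟨u, hu, by rw [huuv]; exact slice_infix _ _ _⟩
    have hvsf : SquareFree v := sqf_infix ⟨w.take q0, w.drop (q0+4), hw_eq.symm⟩ hw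
    exact F2main v (by omega) hvsf hsq
  · -- long squares: 17 ∣ L, lift to a square in w
    have hL17 : L % 17 = 0 := by
      have hj : i ≤ 17 * ((i + 16) / 17) ∧ 17 * ((i + 16) / 17) ≤ i + 16 := by omega
      set j := 17 * ((i + 16) / 17) with hjdef
      rcases Nat.lt_or_ge (j + 17) (i + L + 1) with hcase | hcase
      · have hsync := sync w (w.getD (j/17) 0) (j + L) (by omega) (fun r hr => by
          have hE := E (j - i + r) (by omega)
          rw [show i + (j - i + r) = j + r by omega,
            show i + L + (j - i + r) = j + L + r by omega] at hE
          rw [← hE, phiW_getD w (j+r) (by omega),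
            show (j+r)/17 = j/17 by omega, show (j+r)%17 = r by omega])
        omega
      · have hsync := sync w (w.getD ((j+17)/17) 0) (j + 17 - L) (by omega) (fun r hr => by
          have hE := E (j + 17 - L - i + r) (by omega)
          rw [show i + (j + 17 - L - i + r) = j + 17 - L + r by omega,
            show i + L + (j + 17 - L - i + r) = j + 17 + r by omega] at hE
          rw [show j + 17 - L + r = j + 17 - L + r from rfl, hE,
            phiW_getD w (j+17+r) (by omega),
            show (j+17+r)/17 = (j+17)/17 by omega, show (j+17+r)%17 = r by omega])
        omega
    obtain ⟨p, hLp⟩ : ∃ p, L = 17 * p := ⟨L/17, by omega⟩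
    have hp2 : 2 ≤ p := by omega
    have key : ∀ j < p, w.getD (i/17 + j) 0 = w.getD (i/17 + p + j) 0 := by
      intro j hj
      by_cases hcase : i % 17 ≤ 17*j
      · have hE := E (17*(i/17+j) - i) (by omega)
        rw [show i + (17*(i/17+j) - i) = 17*(i/17+j) by omega,
          show i + L + (17*(i/17+j) - i) = 17*(i/17+p+j) by omega] at hE
        rw [phiW_getD w (17*(i/17+j)) (by omega), phiW_getD w (17*(i/17+p+j)) (by omega),
          show 17*(i/17+j)/17 = i/17 + j by omega, show 17*(i/17+j)%17 = 0 by omega,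
          show 17*(i/17+p+j)/17 = i/17+p+j by omega, show 17*(i/17+p+j)%17 = 0 by omega,
          phi_getD_zero, phi_getD_zero] at hE
        exact hE
      · have hj0 : j = 0 := by omega
        subst hj0
        rw [Nat.add_zero, Nat.add_zero]
        apply phi_getD_16
        have hE := E (16 - i % 17) (by omega)
        rw [show i + (16 - i % 17) = 17*(i/17) + 16 by omega,
          show i + L + (16 - i % 17) = 17*(i/17+p) + 16 by omega] at hE
        rw [phiW_getD w (17*(i/17)+16) (by omega), phiW_getD w (17*(i/17+p)+16) (by omega),
          show (17*(i/17)+16)/17 = i/17 by omega, show (17*(i/17)+16)%17 = 16 by omega,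
          show (17*(i/17+p)+16)/17 = i/17+p by omega, show (17*(i/17+p)+16)%17 = 16 by omega] at hE
        exact hE
    exact hw (square_of_getD w (i/17) p (by omega) (by omega) key)


lemma phiW_pair (a b : Fin 3) : phiW [a,b] = phi a ++ phi b := by simp [phiW]

lemma irr_finite (w : List (Fin 3)) (hw : SquareFree w) (hlen2 : 2 ≤ w.length)
    (w1 w2 : List (Fin 3)) (c : Fin 3) (hdec : phiW w = w1 ++ [c] ++ w2)
    (h1 : w1 ≠ []) (h2 : w2 ≠ []) : HasSquare (w1 ++ w2) := by
  have hNw : (phiW w).length = 17 * w.length := phiW_len w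
  set n := w1.length with hndef
  have hn1 : 1 ≤ n := List.length_pos_iff.2 h1
  have hw2pos : 1 ≤ w2.length := List.length_pos_iff.2 h2
  have htot : n + 1 + w2.length = 17 * w.length := by
    have := congrArg List.length hdec; simp [List.length_append] at this; omega
  obtain ⟨q, p, hqp, hp1, hp32, hq2⟩ :
      ∃ q p, n = 17*q + p ∧ 1 ≤ p ∧ p ≤ 32 ∧ q + 2 ≤ w.length := by
    by_cases h0 : n % 17 = 0
    · exact ⟨n/17 - 1, 17, by omega, by omega, by omega, by omega⟩
    · by_cases hq : n/17 + 2 ≤ w.length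
      · exact ⟨n/17, n % 17, by omega, by omega, by omega, hq⟩
      · exact ⟨w.length - 2, n - 17*(w.length - 2), by omega, by omega, by omega, by omega⟩
  set a := w.getD q 0 with hadef
  set b := w.getD (q+1) 0 with hbdef
  have hab : a ≠ b := adj_ne w hw q (by omega)
  have hsplit : phiW w = phiW (w.take q) ++ (phi a ++ phi b) ++ phiW (w.drop (q+2)) := by
    conv_lhs => rw [decomp2 w q (by omega)]
    rw [phiW_append, phiW_append, phiW_pair]
  have hPlen : (phiW (w.take q)).length = 17 * q := by
    rw [phiW_len]; simp [List.length_take]; omega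
  have hw1 : w1 = (phiW w).take n := by
    rw [hdec, List.append_assoc, List.take_left]
  have hw2' : w2 = (phiW w).drop (n+1) := by
    rw [hdec, show n + 1 = (w1 ++ [c]).length by simp [List.length_append, hndef], List.drop_left]
  have hB := slice_of_eq hsplit.symm
  rw [hPlen, show (phi a ++ phi b).length = 34 by simp [List.length_append, phi_len]] at hB
  have hP : phiW (w.take q) = (phiW w).take (17*q) := by
    rw [← hPlen, hsplit, List.append_assoc, List.take_left]
  have hS : phiW (w.drop (q+2)) = (phiW w).drop (17*q + 34) := by
    rw [hsplit, show 17*q+34 = ((phiW (w.take q) ++ (phi a ++ phi b))).length by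
      simp [List.length_append, hPlen, phi_len], ← List.append_assoc, List.drop_left]
  have hBt : delW p (phi a ++ phi b) =
      ((phiW w).drop (17*q)).take p ++ ((phiW w).drop (n+1)).take (33 - p) := by
    rw [delW, ← hB]
    congr 1
    · rw [List.take_take, min_eq_left (by omega : p ≤ 34)]
    · rw [List.drop_take, List.drop_drop, show 17*q + (p+1) = n + 1 by omega,
        show 34 - (p+1) = 33 - p by omega]
  have hkey : w1 ++ w2 =
      phiW (w.take q) ++ delW p (phi a ++ phi b) ++ phiW (w.drop (q+2)) := by
    rw [hw1, hw2', hP, hS]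
    rw [show (phiW w).take n = (phiW w).take (17*q) ++ ((phiW w).drop (17*q)).take p from by
      rw [← List.take_add, show 17*q + p = n by omega]]
    conv_lhs => rw [show (phiW w).drop (n+1) =
        ((phiW w).drop (n+1)).take (33-p) ++ (phiW w).drop (17*q+34) from by
      conv_lhs => rw [← List.take_append_drop (33-p) ((phiW w).drop (n+1))]
      rw [List.drop_drop, show n + 1 + (33-p) = 17*q + 34 by omega]]
    rw [hBt]
    simp [List.append_assoc]
  rw [hkey]
  exact hasSquare_infix ((hasSquare_iff_sqChk _).2 (F3del a b hab p hp1 hp32))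
    ⟨phiW (w.take q), phiW (w.drop (q+2)), rfl⟩


lemma range_map_getD (x : ℕ → Fin 3) (q0 k idx : ℕ) (h : idx < k) :
    (((List.range k).map (fun j => x (q0 + j))).getD idx 0) = x (q0 + idx) := by
  rw [List.getD_eq_getElem _ _ (by simp [List.length_map, List.length_range]; omega)]
  simp

lemma window_sqf (x : ℕ → Fin 3) (hx : InfSquareFree x) (q0 k : ℕ) :
    SquareFree ((List.range k).map (fun j => x (q0 + j))) := by
  rintro ⟨u', hu', s, t, hst⟩
  apply hx
  refine ⟨u', hu', q0 + s.length, ?_⟩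
  intro i hi
  have huu : (u'++u').length = 2 * u'.length := by simp [List.length_append]; omega
  have hlen : s.length + (u'++u').length + t.length = k := by
    have := congrArg List.length hst
    simp [List.length_append, List.length_map, List.length_range] at this
    omega
  have e := slice_of_eq hst
  calc (u'++u').getD i 0
      = ((List.range k).map (fun j => x (q0 + j))).getD (s.length + i) 0 := by
        rw [← e, slice_getD _ _ _ _ hi]
    _ = x (q0 + (s.length + i)) := range_map_getD x q0 k _ (by omega)
    _ = x (q0 + s.length + i) := by rw [Nat.add_assoc]

lemma phiW_window_getD (x : ℕ → Fin 3) (q0 k t : ℕ) (h : t < 17 * k) :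
    ((phiW ((List.range k).map (fun j => x (q0 + j)))).getD t 0) = phiInf x (17*q0 + t) := by
  rw [phiW_getD _ _ (by simp [List.length_map, List.length_range]; omega)]
  rw [range_map_getD x q0 k (t/17) (by omega)]
  show _ = (phi (x ((17*q0+t)/17))).getD ((17*q0+t) % 17) 0
  rw [show (17*q0+t)/17 = q0 + t/17 by omega, show (17*q0+t)%17 = t % 17 by omega]

lemma inf_sqf_phiInf (x : ℕ → Fin 3) (hx : InfSquareFree x) : InfSquareFree (phiInf x) := by
  rintro ⟨u, hu, m, hocc⟩
  have hL1 : 1 ≤ u.length := List.length_pos_iff.2 hu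
  set LL := (u ++ u).length with hLL
  have hLL2 : LL = 2 * u.length := by rw [hLL]; simp [List.length_append]; omega
  set q0 := m / 17 with hq0
  set d := m % 17 with hd
  set k := (d + LL + 16)/17 with hk
  set v := (List.range k).map (fun j => x (q0 + j)) with hv
  have hvlen : v.length = k := by simp [hv, List.length_map, List.length_range]
  apply sqf_phiW v (window_sqf x hx q0 k)
  refine ⟨u, hu, ?_⟩
  have heq : u ++ u = ((phiW v).drop d).take LL := by
    apply list_ext_getD
    · rw [slice_len _ _ _ (by rw [phiW_len, hvlen]; omega), hLL]
    · intro i hi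
      rw [← hLL] at hi
      rw [slice_getD _ _ _ _ hi, hv, phiW_window_getD x q0 k (d+i) (by omega),
        show 17*q0 + (d+i) = m + i by omega]
      exact hocc i hi
  rw [heq]
  exact slice_infix _ _ _

lemma phiInf_two_blocks (x : ℕ → Fin 3) (q s' : ℕ) (h : s' < 34) :
    phiInf x (17*q + s') = (phi (x q) ++ phi (x (q+1))).getD s' 0 := by
  rcases Nat.lt_or_ge s' 17 with h1 | h1
  · rw [List.getD_append _ _ _ _ (by rw [phi_len]; omega)]
    show (phi (x ((17*q+s')/17))).getD ((17*q+s')%17) 0 = _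
    rw [show (17*q+s')/17 = q by omega, show (17*q+s')%17 = s' by omega]
  · rw [List.getD_append_right _ _ _ _ (by rw [phi_len]; omega), phi_len]
    show (phi (x ((17*q+s')/17))).getD ((17*q+s')%17) 0 = _
    rw [show (17*q+s')/17 = q+1 by omega, show (17*q+s')%17 = s' - 17 by omega]

lemma inf_adj_ne (x : ℕ → Fin 3) (hx : InfSquareFree x) (q : ℕ) : x q ≠ x (q+1) := by
  intro he
  apply hx
  refine ⟨[x q], by simp, q, ?_⟩
  intro i hi
  have : i = 0 ∨ i = 1 := by simp [List.length_append] at hi; omega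
  rcases this with rfl | rfl
  · simp
  · simpa using he

lemma inf_irr_del (x : ℕ → Fin 3) (hx : InfSquareFree x) (n : ℕ) (hn : 1 ≤ n) :
    ∃ u : List (Fin 3), u ≠ [] ∧ InfFactor (u ++ u) (delAt (phiInf x) n) := by
  obtain ⟨q, p, hqp, hp1, hp17⟩ : ∃ q p, n = 17*q + p ∧ 1 ≤ p ∧ p ≤ 17 := by
    by_cases h0 : n % 17 = 0
    · exact ⟨n/17 - 1, 17, by omega, by omega, by omega⟩
    · exact ⟨n/17, n % 17, by omega, by omega, by omega⟩
  set B := phi (x q) ++ phi (x (q+1)) with hBdef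
  have hblen : B.length = 34 := by simp [hBdef, List.length_append, phi_len]
  have hhs : HasSquare (delW p B) :=
    (hasSquare_iff_sqChk _).2 (F3del (x q) (x (q+1)) (inf_adj_ne x hx q) p hp1 (by omega))
  obtain ⟨u, hu, s, t, hst⟩ := hhs
  have hdlen : (delW p B).length = 33 := by
    simp [delW, List.length_append, List.length_take, List.length_drop, hblen]; omega
  have hval : ∀ t' < 33, (delW p B).getD t' 0 = delAt (phiInf x) n (17*q + t') := by
    intro t' ht'
    have hBd : (delW p B).getD t' 0 = if t' < p then B.getD t' 0 else B.getD (t'+1) 0 := by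
      split
      case isTrue h =>
        rw [delW, List.getD_append _ _ _ _ (by simp [List.length_take, hblen]; omega)]
        rw [getD_take' _ _ _ h]
      case isFalse h =>
        rw [delW, List.getD_append_right _ _ _ _ (by simp [List.length_take, hblen]; omega)]
        rw [getD_drop']
        congr 1
        simp [List.length_take, hblen]
        omega
    rw [hBd]
    simp only [delAt]
    by_cases hc : t' < p
    · rw [if_pos hc, if_pos (by omega : 17*q + t' < n)]
      exact (phiInf_two_blocks x q t' (by omega)).symm
    · rw [if_neg hc, if_neg (by omega : ¬ (17*q + t' < n))]
      rw [show 17*q + t' + 1 = 17*q + (t'+1) by omega]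
      exact (phiInf_two_blocks x q (t'+1) (by omega)).symm
  have hlen2 : s.length + 2 * u.length + t.length = 33 := by
    have h2 := congrArg List.length hst
    rw [hdlen] at h2
    simp [List.length_append] at h2
    omega
  refine ⟨u, hu, 17*q + s.length, ?_⟩
  intro i hi
  have huu : (u++u).length = 2 * u.length := by simp [List.length_append]; omega
  have e := slice_of_eq hst
  calc (u++u).getD i 0
      = (delW p B).getD (s.length + i) 0 := by rw [← e, slice_getD _ _ _ _ hi]
    _ = delAt (phiInf x) n (17*q + (s.length + i)) := hval _ (by omega)
    _ = delAt (phiInf x) n (17*q + s.length + i) := by rw [Nat.add_assoc]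

def Wk : ℕ → List (Fin 3)
  | 0 => [0]
  | k+1 => phiW (Wk k)

lemma Wk_len (k : ℕ) : (Wk k).length = 17^k := by
  induction k with
  | zero => rfl
  | succ k ih => rw [Wk, phiW_len, ih, pow_succ, Nat.mul_comm]

lemma Wk_sqf (k : ℕ) : SquareFree (Wk k) := by
  induction k with
  | zero =>
    intro hs
    obtain ⟨i, hi, L, hL, h1, _, _⟩ := (hasSquare_iff_sqChk _).1 hs
    simp [Wk] at hi hL
    omega
  | succ k ih => exact sqf_phiW _ ih

lemma Wk_prefix (k : ℕ) : Wk k <+: Wk (k+1) := by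
  induction k with
  | zero => exact ⟨(phiW [0]).drop 1, by decide⟩
  | succ k ih =>
    obtain ⟨t, ht⟩ := ih
    refine ⟨phiW t, ?_⟩
    conv_rhs => rw [show Wk (k+1+1) = phiW (Wk (k+1)) from rfl, ← ht, phiW_append]
    rfl

lemma Wk_prefix_le {k k' : ℕ} (h : k ≤ k') : Wk k <+: Wk k' := by
  induction k' with
  | zero => rw [Nat.le_zero.1 h]
  | succ k' ih =>
    rcases Nat.lt_or_ge k (k'+1) with h2 | h2
    · exact (ih (by omega)).trans (Wk_prefix k')
    · rw [show k = k'+1 by omega]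

lemma prefix_getD {l₁ l₂ : List (Fin 3)} (h : l₁ <+: l₂) (i : ℕ) (hi : i < l₁.length) :
    l₁.getD i 0 = l₂.getD i 0 := by
  obtain ⟨t, rfl⟩ := h
  rw [List.getD_append _ _ _ _ hi]

def xfix (n : ℕ) : Fin 3 := (Wk (n+1)).getD n 0

lemma lt_pow17 (n : ℕ) : n < 17^n := Nat.lt_pow_self (by norm_num)

lemma xfix_eq (k n : ℕ) (h : n < 17^k) : xfix n = (Wk k).getD n 0 := by
  rcases Nat.le_total (n+1) k with hle | hle
  · exact prefix_getD (Wk_prefix_le hle) n (by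
      rw [Wk_len]
      calc n < 17^n := lt_pow17 n
        _ ≤ 17^(n+1) := Nat.pow_le_pow_right (by norm_num) (by omega))
  · exact (prefix_getD (Wk_prefix_le hle) n (by rw [Wk_len]; exact h)).symm

lemma xfix_sqf : InfSquareFree xfix := by
  rintro ⟨u, hu, m, hocc⟩
  set k := m + (u++u).length with hk
  have hbig : m + (u++u).length < 17^k := by
    calc m + (u++u).length = k := hk.symm
      _ < 17^k := lt_pow17 k
  apply Wk_sqf k
  refine ⟨u, hu, ?_⟩
  have heq : u ++ u = ((Wk k).drop m).take ((u++u).length) := by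
    apply list_ext_getD
    · rw [slice_len _ _ _ (by rw [Wk_len]; omega)]
    · intro i hi
      rw [slice_getD _ _ _ _ hi, ← xfix_eq k (m+i) (by omega)]
      exact hocc i hi
  rw [heq]
  exact slice_infix _ _ _

theorem phi_of_squareFree_irreducibly_squareFree :
    (∀ w : List (Fin 3), SquareFree w → 2 ≤ w.length → IrrSF (phiW w)) ∧
    (∀ x : ℕ → Fin 3, InfSquareFree x → InfIrrSF (phiInf x)) ∧
    (∃ y : ℕ → Fin 3, InfIrrSF y) :=
  ⟨fun w hw hlen => ⟨sqf_phiW w hw,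
      fun w1 w2 a hdec h1 h2 => irr_finite w hw hlen w1 w2 a hdec h1 h2⟩,
    fun x hx => ⟨inf_sqf_phiInf x hx, fun n hn => inf_irr_del x hx n hn⟩,
    ⟨phiInf xfix, ⟨inf_sqf_phiInf xfix xfix_sqf, fun n hn => inf_irr_del xfix xfix_sqf n hn⟩⟩⟩
end
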